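/- arXiv:1402.0133 — 7 statements merged into one kernel-verified Lean document; each statement's English description precedes it below -/
import Mathlib

section
/- The double integral ∫₀¹∫₀¹ 1/((1+xy)(1+x)(1+y)) dx dy equals π²/24. -/
open Real MeasureTheory

lemma basel' : HasSum (fun n : ℕ => (1:ℝ)/((n:ℝ)+1)^2) (π^2/6) := by
  have h := (hasSum_nat_add_iff (f := fun n : ℕ => (1:ℝ)/(n:ℝ)^2) 1).2
    (by simpa using hasSum_zeta_two)
  convert h using 2 with n
  case e'_3 => rfl
  push_cast
  ring

lemma h_odd : HasSum (fun k : ℕ => (1:ℝ)/((2*k:ℝ)+2)^2) (π^2/24) := by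
  have h := basel'.mul_left (1/4)
  have e : π^2/24 = (1/4) * (π^2/6) := by ring
  rw [e]
  convert h using 2 with k
  case e'_3 => rfl
  field_simp
  ring

lemma h_even : HasSum (fun k : ℕ => (1:ℝ)/((2*k:ℝ)+1)^2) (π^2/8) := by
  have hs : Summable (fun k : ℕ => (1:ℝ)/((2*k:ℝ)+1)^2) := by
    apply Summable.of_nonneg_of_le (fun k => by positivity) (fun k => ?_) basel'.summable
    apply one_div_le_one_div_of_le (by positivity)
    have : (0:ℝ) ≤ (k:ℝ) := Nat.cast_nonneg k
    nlinarith
  have h1 : HasSum (fun n : ℕ => (1:ℝ)/((n:ℝ)+1)^2) (∑' k : ℕ, (1:ℝ)/((2*k:ℝ)+1)^2 + π^2/24) := by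
    apply HasSum.even_add_odd
    · convert hs.hasSum using 2 with k; push_cast; ring_nf
    · convert h_odd using 2 with k; push_cast; ring_nf
  have := basel'.unique h1
  have e : ∑' k : ℕ, (1:ℝ)/((2*k:ℝ)+1)^2 = π^2/8 := by linarith
  rw [← e]; exact hs.hasSum

lemma alt_sum : HasSum (fun n : ℕ => (-1:ℝ)^n/((n:ℝ)+1)^2) (π^2/12) := by
  have e : π^2/12 = π^2/8 + -(π^2/24) := by ring
  rw [e]
  apply HasSum.even_add_odd
  · convert h_even using 2 with k
    push_cast
    rw [pow_mul]
    norm_num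
  · convert h_odd.neg using 2 with k
    case e'_3 => rfl
    push_cast
    rw [pow_succ, pow_mul]
    norm_num
    ring_nf

lemma hasSum_loglem {t : ℝ} (ht : t ∈ Set.Ioo (0:ℝ) 1) :
    HasSum (fun n : ℕ => (-1:ℝ)^n * t^n/((n:ℝ)+1)) (Real.log (1+t)/t) := by
  obtain ⟨h0, h1⟩ := ht
  have habs : |(-t)| < 1 := by rw [abs_neg, abs_of_pos h0]; exact h1
  have h := (hasSum_pow_div_log_of_abs_lt_one habs).mul_left (-1/t)
  have e1 : (-1/t) * (-Real.log (1 - -t)) = Real.log (1+t)/t := by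
    rw [sub_neg_eq_add]; field_simp
  rw [e1] at h
  convert h using 2 with n
  case e'_3 => rfl
  have ht0 : t ≠ 0 := ne_of_gt h0
  rw [neg_pow, pow_succ]
  field_simp
  ring

lemma hval (n : ℕ) : ∫ t in Set.Ioo (0:ℝ) 1, (-1:ℝ)^n * t^n/((n:ℝ)+1) = (-1:ℝ)^n/((n:ℝ)+1)^2 := by
  rw [← integral_Ioc_eq_integral_Ioo, ← intervalIntegral.integral_of_le zero_le_one]
  have : ∀ t : ℝ, (-1:ℝ)^n * t^n/((n:ℝ)+1) = ((-1:ℝ)^n/((n:ℝ)+1)) * t^n := by intro t; ring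
  simp_rw [this]
  rw [intervalIntegral.integral_const_mul, integral_pow]
  have hn : ((n:ℝ)+1) ≠ 0 := by positivity
  field_simp
  ring

lemma lemA : ∫ t in Set.Ioo (0:ℝ) 1, Real.log (1+t)/t = π^2/12 := by
  have hF_int : ∀ n : ℕ, IntegrableOn (fun t : ℝ => (-1:ℝ)^n * t^n/((n:ℝ)+1)) (Set.Ioo 0 1) :=
    fun n => (Continuous.integrableOn_Icc (by continuity)).mono_set Set.Ioo_subset_Icc_self
  have hnorm : ∀ n : ℕ, (∫ t in Set.Ioo (0:ℝ) 1, ‖(-1:ℝ)^n * t^n/((n:ℝ)+1)‖) = 1/((n:ℝ)+1)^2 := by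
    intro n
    rw [setIntegral_congr_fun measurableSet_Ioo (g := fun t : ℝ => t^n/((n:ℝ)+1)) ?_]
    · rw [← integral_Ioc_eq_integral_Ioo, ← intervalIntegral.integral_of_le zero_le_one]
      rw [intervalIntegral.integral_div, integral_pow]
      have hn : ((n:ℝ)+1) ≠ 0 := by positivity
      rw [zero_pow (Nat.succ_ne_zero n)]
      field_simp
      ring
    · intro t ht
      have h0 : (0:ℝ) < t := ht.1
      show ‖(-1:ℝ)^n * t^n/((n:ℝ)+1)‖ = t^n/((n:ℝ)+1)
      rw [Real.norm_eq_abs, abs_div, abs_mul, abs_pow, abs_pow, abs_neg, abs_one, one_pow,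
        one_mul, abs_of_pos h0, abs_of_pos (by positivity : (0:ℝ) < (n:ℝ)+1)]
  have key := integral_tsum_of_summable_integral_norm (μ := volume.restrict (Set.Ioo (0:ℝ) 1))
    (F := fun (n : ℕ) (t : ℝ) => (-1:ℝ)^n * t^n/((n:ℝ)+1)) hF_int
    (by simp_rw [hnorm]; exact basel'.summable)
  have hcong : (∫ t in Set.Ioo (0:ℝ) 1, (∑' n : ℕ, (-1:ℝ)^n * t^n/((n:ℝ)+1)))
      = ∫ t in Set.Ioo (0:ℝ) 1, Real.log (1+t)/t :=
    setIntegral_congr_fun measurableSet_Ioo (fun t ht => (hasSum_loglem ht).tsum_eq)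
  rw [← hcong, ← key]
  simp_rw [hval]
  exact alt_sum.tsum_eq

noncomputable def gg (x : ℝ) : ℝ := (Real.log 2 - Real.log (1+x)) / ((1-x)*(1+x))

lemma f_mem {t : ℝ} (ht : t ∈ Set.Ioo (0:ℝ) 1) : (1-t)/(1+t) ∈ Set.Ioo (0:ℝ) 1 := by
  obtain ⟨h0, h1⟩ := ht
  constructor
  · apply div_pos <;> linarith
  · rw [div_lt_one (by linarith)]; linarith

lemma aux_e2 {t : ℝ} (h2 : (1:ℝ)+t ≠ 0) : 1 + (1-t)/(1+t) = 2/(1+t) := by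
  field_simp
  ring

lemma aux_e3 {t : ℝ} (h2 : (1:ℝ)+t ≠ 0) : 1 - (1-t)/(1+t) = 2*t/(1+t) := by
  field_simp
  ring

lemma f_invol {t : ℝ} (ht : t ∈ Set.Ioo (0:ℝ) 1) : (1 - (1-t)/(1+t))/(1 + (1-t)/(1+t)) = t := by
  obtain ⟨h0, h1⟩ := ht
  have h2 : (1:ℝ)+t ≠ 0 := by linarith
  rw [aux_e2 h2, aux_e3 h2]
  rw [div_div_div_cancel_right₀]
  · exact mul_div_cancel_left₀ t two_ne_zero
  · exact h2

lemma subst_lem : ∫ x in Set.Ioo (0:ℝ) 1, gg x = π^2/24 := by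
  set f : ℝ → ℝ := fun t => (1-t)/(1+t) with hf
  have himg : f '' Set.Ioo (0:ℝ) 1 = Set.Ioo (0:ℝ) 1 := by
    ext x
    constructor
    · rintro ⟨t, ht, rfl⟩; exact f_mem ht
    · intro hx; exact ⟨f x, f_mem hx, f_invol hx⟩
  have hderiv : ∀ t ∈ Set.Ioo (0:ℝ) 1,
      HasDerivWithinAt f (-2/(1+t)^2) (Set.Ioo (0:ℝ) 1) t := by
    intro t ht
    have h2 : (1:ℝ)+t ≠ 0 := by have := ht.1; intro h; linarith
    have : HasDerivAt f ((-1 * (1+t) - (1-t) * 1)/(1+t)^2) t := by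
      exact (((hasDerivAt_id t).neg.const_add 1).div ((hasDerivAt_id t).const_add 1) h2)
    have e : (-1 * (1+t) - (1-t) * 1)/(1+t)^2 = -2/(1+t)^2 := by ring_nf
    rw [e] at this
    exact this.hasDerivWithinAt
  have hinvol : ∀ t ∈ Set.Ioo (0:ℝ) 1, f (f t) = t := fun t ht => f_invol ht
  have hinj : Set.InjOn f (Set.Ioo (0:ℝ) 1) := by
    intro a ha b hb hab
    rw [← hinvol a ha, ← hinvol b hb, hab]
  have key := integral_image_eq_integral_abs_deriv_smul measurableSet_Ioo hderiv hinj gg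
  rw [himg] at key
  rw [key]
  have hcong : ∀ t ∈ Set.Ioo (0:ℝ) 1, |(-2/(1+t)^2)| • gg (f t) = (1/2) * (Real.log (1+t)/t) := by
    intro t ht
    obtain ⟨h0, h1⟩ := ht
    have h2 : (0:ℝ) < 1+t := by linarith
    have e2 : 1 + f t = 2/(1+t) := aux_e2 (ne_of_gt h2)
    have e3 : 1 - f t = 2*t/(1+t) := aux_e3 (ne_of_gt h2)
    have habs : |(-2/(1+t)^2)| = 2/(1+t)^2 := by
      rw [abs_div, abs_neg, abs_two, abs_of_pos (by positivity : (0:ℝ) < (1+t)^2)]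
    rw [habs, smul_eq_mul, gg, e2, e3, Real.log_div two_ne_zero (ne_of_gt h2)]
    field_simp
    ring
  rw [setIntegral_congr_fun measurableSet_Ioo hcong, integral_const_mul, lemA]
  ring

lemma inner_int {x : ℝ} (hx : x ∈ Set.Ioo (0:ℝ) 1) :
    (∫ y in (0:ℝ)..1, 1 / ((1 + x * y) * (1 + x) * (1 + y))) = gg x := by
  obtain ⟨hx0, hx1⟩ := hx
  have hc : (1-x)*(1+x) ≠ 0 := by
    apply mul_ne_zero <;> intro h <;> linarith
  have key : (∫ y in (0:ℝ)..1, 1 / ((1 + x * y) * (1 + x) * (1 + y)))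
      = ((Real.log (1+1) - Real.log (1+x*1)) * ((1-x)*(1+x))⁻¹)
        - ((Real.log (1+0) - Real.log (1+x*0)) * ((1-x)*(1+x))⁻¹) := by
    apply intervalIntegral.integral_eq_sub_of_hasDerivAt
      (f := fun y => (Real.log (1+y) - Real.log (1+x*y)) * ((1-x)*(1+x))⁻¹)
    · intro y hy
      rw [Set.uIcc_of_le zero_le_one] at hy
      obtain ⟨hy0, hy1⟩ := hy
      have h1y : (0:ℝ) < 1 + y := by linarith
      have h1xy : (0:ℝ) < 1 + x * y := by nlinarith
      have hd : HasDerivAt (fun y => (Real.log (1+y) - Real.log (1+x*y)) * ((1-x)*(1+x))⁻¹)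
          ((1/(1+y) - x/(1+x*y)) * ((1-x)*(1+x))⁻¹) y := by
        apply HasDerivAt.mul_const
        have hb : HasDerivAt (fun y : ℝ => Real.log (1 + x * y)) (x/(1+x*y)) y := by
          have := ((((hasDerivAt_id y).const_mul x).const_add 1).log (ne_of_gt h1xy))
          simpa using this
        have ha : HasDerivAt (fun y : ℝ => Real.log (1 + y)) (1/(1+y)) y := by
          have := (((hasDerivAt_id y).const_add 1).log (ne_of_gt h1y))
          simpa using this
        exact ha.sub hb
      convert hd using 1
      case e'_4 => rfl
      case e'_5 => rfl
      field_simp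
      ring
    · apply ContinuousOn.intervalIntegrable
      apply ContinuousOn.div continuousOn_const
      · fun_prop
      · intro y hy
        rw [Set.uIcc_of_le zero_le_one] at hy
        obtain ⟨hy0, hy1⟩ := hy
        have h1y : (0:ℝ) < 1 + y := by linarith
        have h1xy : (0:ℝ) < 1 + x * y := by nlinarith
        positivity
  rw [key, gg]
  rw [show (1:ℝ)+1 = 2 by norm_num, mul_one, mul_zero, add_zero, Real.log_one]
  field_simp
  ring

theorem stmt_2 :
    (∫ x in (0:ℝ)..1, ∫ y in (0:ℝ)..1, 1 / ((1 + x * y) * (1 + x) * (1 + y)))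
      = Real.pi ^ 2 / 24 := by
  have h1 : ∀ᵐ x : ℝ, x ≠ 1 := by
    rw [MeasureTheory.ae_iff]
    have e : {a : ℝ | ¬ a ≠ 1} = {1} := by ext a; simp
    rw [e]
    exact Real.volume_singleton
  have hcong : (∫ x in (0:ℝ)..1, ∫ y in (0:ℝ)..1, 1 / ((1 + x * y) * (1 + x) * (1 + y)))
      = ∫ x in (0:ℝ)..1, gg x := by
    apply intervalIntegral.integral_congr_ae
    filter_upwards [h1] with x hx hmem
    rw [Set.uIoc_of_le zero_le_one] at hmem
    exact inner_int ⟨hmem.1, lt_of_le_of_ne hmem.2 hx⟩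
  rw [hcong, intervalIntegral.integral_of_le zero_le_one,
    MeasureTheory.integral_Ioc_eq_integral_Ioo, subst_lem]
end

section
/- The series ∑_{n=0}^∞ (-1)^n (∑_{k=1}^∞ (-1)^(k-1)/(n+k))² converges to π²/24. -/
open Filter

open Finset

noncomputable def aaX (N : ℕ) : ℝ := ∑ j ∈ Finset.range N, (-1 : ℝ) ^ j / (j + 1)
noncomputable def hhX (N : ℕ) : ℝ := ∑ j ∈ Finset.range N, (1 : ℝ) / (j + 1)

lemma aaX_succ (N : ℕ) : aaX (N + 1) = aaX N + (-1) ^ N / (N + 1) := sum_range_succ _ N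

lemma hhX_succ (N : ℕ) : hhX (N + 1) = hhX N + 1 / (N + 1) := sum_range_succ _ N

lemma hhX_nonneg (N : ℕ) : 0 ≤ hhX N := sum_nonneg fun j _ => by positivity

lemma hhX_ge_one {N : ℕ} (h : 1 ≤ N) : 1 ≤ hhX N := by
  have : hhX 1 ≤ hhX N := by
    apply sum_le_sum_of_subset_of_nonneg (range_subset_range.mpr h) (fun j _ _ => by positivity)
  simpa [hhX] using this

lemma bX_antitone : Antitone (fun i : ℕ => (1 : ℝ) / (i + 1)) := by
  apply antitone_nat_of_succ_le
  intro n
  apply one_div_le_one_div_of_le (by positivity)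
  push_cast
  linarith

lemma abel_eval {b : ℕ → ℝ} {F : ℝ → ℝ} (hb : Antitone b) (h0 : Tendsto b atTop (nhds 0))
    (hF : ∀ x : ℝ, x ∈ Set.Ioo (0 : ℝ) 1 → HasSum (fun n => ((-1 : ℝ) ^ n * b n) * x ^ n) (F x))
    {V : ℝ} (hV : Tendsto F (nhdsWithin 1 (Set.Iio 1)) (nhds V)) :
    Tendsto (fun N => ∑ n ∈ Finset.range N, (-1 : ℝ) ^ n * b n) atTop (nhds V) := by
  obtain ⟨l, hl⟩ := hb.tendsto_alternating_series_of_tendsto_zero h0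
  have habel := Real.tendsto_tsum_powerSeries_nhdsWithin_lt hl
  have hmem : Set.Ioo (0 : ℝ) 1 ∈ nhdsWithin (1 : ℝ) (Set.Iio 1) :=
    Ioo_mem_nhdsLT_of_mem (by constructor <;> norm_num)
  have h2 : Tendsto F (nhdsWithin 1 (Set.Iio 1)) (nhds l) := by
    refine habel.congr' ?_
    filter_upwards [hmem] with x hx
    exact ((hF x hx).tsum_eq)
  rwa [tendsto_nhds_unique h2 hV] at hl

lemma hasSum_log_aux {x : ℝ} (hx : x ∈ Set.Ioo (0 : ℝ) 1) :
    HasSum (fun n : ℕ => (-1 : ℝ) ^ n * x ^ (n + 1) / (n + 1)) (Real.log (1 + x)) := by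
  obtain ⟨hx0, hx1⟩ := hx
  have h := (Real.hasSum_pow_div_log_of_abs_lt_one (x := -x)
    (by rw [abs_neg]; rw [abs_of_pos hx0]; exact hx1)).neg
  rw [sub_neg_eq_add, neg_neg] at h
  have e : (fun n : ℕ => -((-x) ^ (n + 1) / ((n : ℝ) + 1)))
      = fun n : ℕ => (-1 : ℝ) ^ n * x ^ (n + 1) / ((n : ℝ) + 1) := by
    funext n
    rw [neg_pow, pow_succ]
    ring
  rwa [e] at h

lemma tendsto_aaX : Tendsto aaX atTop (nhds (Real.log 2)) := by
  have key : Tendsto (fun N => ∑ n ∈ Finset.range N, (-1 : ℝ) ^ n * (1 / (n + 1)))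
      atTop (nhds (Real.log 2)) := by
    apply abel_eval bX_antitone tendsto_one_div_add_atTop_nhds_zero_nat
      (F := fun x => Real.log (1 + x) / x)
    · intro x hx
      have h := (hasSum_log_aux hx).div_const x
      have e : (fun n : ℕ => (-1 : ℝ) ^ n * x ^ (n + 1) / ((n : ℝ) + 1) / x)
          = fun n : ℕ => ((-1 : ℝ) ^ n * (1 / ((n : ℝ) + 1))) * x ^ n := by
        funext n
        have hx0 := hx.1.ne'
        rw [pow_succ]
        field_simp
      rwa [e] at h
    · have hc : ContinuousAt (fun x : ℝ => Real.log (1 + x) / x) 1 := by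
        apply ContinuousAt.div
        · exact (Real.continuousAt_log (by norm_num)).comp (by fun_prop)
        · fun_prop
        · norm_num
      have := hc.tendsto.mono_left (nhdsWithin_le_nhds (s := Set.Iio 1))
      norm_num at this
      exact this
  have e : aaX = fun N => ∑ n ∈ Finset.range N, (-1 : ℝ) ^ n * (1 / (n + 1)) := by
    funext N
    rw [aaX]
    refine Finset.sum_congr rfl fun j _ => ?_
    rw [mul_one_div, div_eq_mul_inv]
  rwa [e]

lemma coeff_id (n : ℕ) :
    ∑ k ∈ range (n + 1), (1 : ℝ) / (((k : ℝ) + 1) * (((n - k : ℕ) : ℝ) + 1))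
      = 2 * hhX (n + 1) / (n + 2) := by
  have hrefl : ∑ k ∈ range (n + 1), (1 : ℝ) / (((n - k : ℕ) : ℝ) + 1) = hhX (n + 1) := by
    rw [hhX]
    have := Finset.sum_range_reflect (fun j : ℕ => (1 : ℝ) / ((j : ℝ) + 1)) (n + 1)
    simpa using this
  have hterm : ∀ k ∈ range (n + 1), (1 : ℝ) / (((k : ℝ) + 1) * (((n - k : ℕ) : ℝ) + 1))
      = (1 / ((n : ℝ) + 2)) * (1 / ((k : ℝ) + 1) + 1 / (((n - k : ℕ) : ℝ) + 1)) := by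
    intro k hk
    have hkn : k ≤ n := Nat.lt_succ_iff.mp (mem_range.mp hk)
    have hcast : ((n - k : ℕ) : ℝ) = (n : ℝ) - (k : ℝ) := by
      push_cast [hkn]
      ring
    have hk1 : (0:ℝ) < (k : ℝ) + 1 := by positivity
    have hk2 : (0:ℝ) < ((n : ℝ) - (k : ℝ)) + 1 := by
      have : (k:ℝ) ≤ (n:ℝ) := by exact_mod_cast hkn
      linarith
    rw [hcast]
    have hn2 : (0:ℝ) < (n : ℝ) + 2 := by positivity
    field_simp
    ring
  rw [sum_congr rfl hterm, ← mul_sum, sum_add_distrib, hrefl]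
  have h2 : ∑ k ∈ range (n+1), (1:ℝ)/((k:ℝ)+1) = hhX (n+1) := rfl
  rw [h2]
  ring

set_option maxHeartbeats 1000000 in
lemma tendsto_eulerX :
    Tendsto (fun N => ∑ n ∈ Finset.range N, (-1 : ℝ) ^ n * (hhX (n + 1) / (n + 2))) atTop
      (nhds (Real.log 2 ^ 2 / 2)) := by
  have hb : Antitone (fun n : ℕ => hhX (n + 1) / ((n : ℝ) + 2)) := by
    apply antitone_nat_of_succ_le
    intro n
    rw [div_le_div_iff₀ (by positivity) (by positivity)]
    have h1 : (1 : ℝ) ≤ hhX (n + 1) := hhX_ge_one (by omega)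
    rw [hhX_succ]
    have hn2 : (0:ℝ) < ((n:ℕ):ℝ) + 1 + 1 := by positivity
    have he : (1:ℝ) / (((n:ℕ)+1 : ℕ) + 1) * ((n:ℝ) + 2) = 1 := by
      push_cast
      field_simp
      ring
    push_cast at he ⊢
    nlinarith
  have h0 : Tendsto (fun n : ℕ => hhX (n + 1) / ((n : ℝ) + 2)) atTop (nhds 0) := by
    have hc := tendsto_one_div_add_atTop_nhds_zero_nat.cesaro
    have hc2 := hc.comp (tendsto_add_atTop_nat 1)
    simp only [Function.comp_def] at hc2
    apply tendsto_of_tendsto_of_tendsto_of_le_of_le tendsto_const_nhds hc2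
    · intro n; exact div_nonneg (hhX_nonneg _) (by positivity)
    · intro n
      have h1 : hhX (n + 1) / ((n : ℝ) + 2) ≤ hhX (n + 1) / ((n : ℝ) + 1) := by
        apply div_le_div_of_nonneg_left (hhX_nonneg _) (by positivity) (by linarith)
      calc hhX (n + 1) / ((n : ℝ) + 2) ≤ hhX (n + 1) / ((n : ℝ) + 1) := h1
        _ = ((n + 1 : ℕ) : ℝ)⁻¹ * ∑ i ∈ range (n + 1), (1 : ℝ) / (i + 1) := by
            push_cast; rw [hhX]; ring
  apply abel_eval hb h0 (F := fun x => Real.log (1 + x) ^ 2 / (2 * x ^ 2))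
  · intro x hx
    obtain ⟨hx0, hx1⟩ := hx
    have hlog := hasSum_log_aux ⟨hx0, hx1⟩
    have hnorm : Summable (fun n : ℕ => ‖(-1 : ℝ) ^ n * x ^ (n + 1) / (n + 1)‖) := by
      have hgeo : Summable (fun n : ℕ => x ^ (n + 1)) :=
        (summable_geometric_of_lt_one hx0.le hx1).mul_left x |>.congr
          (fun n => by rw [pow_succ]; ring)
      refine Summable.of_nonneg_of_le (fun n => norm_nonneg _) (fun n => ?_) hgeo
      ·
        rw [Real.norm_eq_abs, abs_div, abs_mul, abs_pow, abs_pow, abs_neg, abs_one, one_pow,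
          one_mul, abs_of_pos hx0]
        rw [abs_of_pos (by positivity : (0:ℝ) < (n:ℝ)+1)]
        apply div_le_self (by positivity)
        linarith [Nat.cast_nonneg (α := ℝ) n]
    have hprod := hasSum_sum_range_mul_of_summable_norm hnorm hnorm
    rw [hlog.tsum_eq] at hprod
    have hcoef : ∀ n : ℕ, (∑ k ∈ range (n + 1),
        ((-1 : ℝ) ^ k * x ^ (k + 1) / (k + 1)) * ((-1 : ℝ) ^ (n - k) * x ^ (n - k + 1) / ((n - k : ℕ) + 1)))
        = (2 * x ^ 2) * (((-1 : ℝ) ^ n * (hhX (n + 1) / (n + 2))) * x ^ n) := by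
      intro n
      have hterm : ∀ k ∈ range (n + 1),
          ((-1 : ℝ) ^ k * x ^ (k + 1) / (k + 1)) * ((-1 : ℝ) ^ (n - k) * x ^ (n - k + 1) / ((n - k : ℕ) + 1))
          = ((-1 : ℝ) ^ n * x ^ (n + 2)) * ((1 : ℝ) / (((k : ℝ) + 1) * (((n - k : ℕ) : ℝ) + 1))) := by
        intro k hk
        have hkn : k ≤ n := Nat.lt_succ_iff.mp (mem_range.mp hk)
        have h1 : (-1 : ℝ) ^ k * (-1 : ℝ) ^ (n - k) = (-1 : ℝ) ^ n := by
          rw [← pow_add]; congr 1; omega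
        have h2 : x ^ (k + 1) * x ^ (n - k + 1) = x ^ (n + 2) := by
          rw [← pow_add]; congr 1; omega
        rw [div_mul_div_comm, mul_mul_mul_comm, h1, h2, mul_one_div]
      rw [sum_congr rfl hterm, ← mul_sum, coeff_id]
      rw [pow_add]
      ring
    rw [show (fun n : ℕ => ∑ k ∈ range (n + 1),
        ((-1 : ℝ) ^ k * x ^ (k + 1) / (k + 1)) * ((-1 : ℝ) ^ (n - k) * x ^ (n - k + 1) / ((n - k : ℕ) + 1)))
        = fun n : ℕ => (2 * x ^ 2) * (((-1 : ℝ) ^ n * (hhX (n + 1) / (n + 2))) * x ^ n)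
      from funext hcoef] at hprod
    have := hprod.div_const (2 * x ^ 2)
    have e : (fun n : ℕ => (2 * x ^ 2) * (((-1 : ℝ) ^ n * (hhX (n + 1) / (n + 2))) * x ^ n) / (2 * x ^ 2))
        = fun n : ℕ => ((-1 : ℝ) ^ n * (hhX (n + 1) / (n + 2))) * x ^ n := by
      funext n
      rw [mul_div_cancel_left₀ _ (by positivity)]
    rw [e] at this
    convert this using 1
    · rfl
    ring
  · have hc : ContinuousAt (fun x : ℝ => Real.log (1 + x) ^ 2 / (2 * x ^ 2)) 1 := by
      apply ContinuousAt.div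
      · exact ((Real.continuousAt_log (by norm_num)).comp (by fun_prop)).pow 2
      · fun_prop
      · norm_num
    have := hc.tendsto.mono_left (nhdsWithin_le_nhds (s := Set.Iio 1))
    norm_num at this
    exact this

lemma aaX_eq (N : ℕ) : aaX N = ∑ i ∈ range N, (-1 : ℝ) ^ i * (1 / (i + 1)) := by
  rw [aaX]
  exact sum_congr rfl fun j _ => by rw [mul_one_div]

lemma aaX_bound (N : ℕ) : |Real.log 2 - aaX N| ≤ 1 / (N + 1) := by
  have hl : Tendsto (fun n => ∑ i ∈ range n, (-1 : ℝ) ^ i * (1 / (i + 1))) atTop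
      (nhds (Real.log 2)) := by
    have := tendsto_aaX
    rwa [show aaX = fun n => ∑ i ∈ range n, (-1 : ℝ) ^ i * (1 / (i + 1)) from funext aaX_eq] at this
  have heven : ∀ k, aaX (2 * k) ≤ Real.log 2 := fun k => by
    rw [aaX_eq]
    exact Antitone.alternating_series_le_tendsto hl bX_antitone k
  have hodd : ∀ k, Real.log 2 ≤ aaX (2 * k + 1) := fun k => by
    rw [aaX_eq]
    exact Antitone.tendsto_le_alternating_series hl bX_antitone k
  rcases Nat.even_or_odd N with ⟨k, hk⟩ | ⟨k, hk⟩
  · have h2k : N = 2 * k := by omega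
    have h1 : aaX N ≤ Real.log 2 := h2k ▸ heven k
    have h2 : Real.log 2 ≤ aaX (N + 1) := by
      have := hodd k
      rwa [show 2 * k + 1 = N + 1 by omega] at this
    rw [aaX_succ, show (-1 : ℝ) ^ N = 1 from Even.neg_one_pow ⟨k, by omega⟩] at h2
    rw [abs_le]
    constructor <;> [linarith [one_div_nonneg.mpr (by positivity : (0:ℝ) ≤ (N:ℝ)+1)]; linarith]
  · have h1 : Real.log 2 ≤ aaX N := by
      have := hodd k
      rwa [show 2 * k + 1 = N by omega] at this
    have h2 : aaX (N + 1) ≤ Real.log 2 := by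
      have := heven (k + 1)
      rwa [show 2 * (k + 1) = N + 1 by omega] at this
    rw [aaX_succ, show (-1 : ℝ) ^ N = -1 from Odd.neg_one_pow ⟨k, by omega⟩,
      show (-1 : ℝ) / ((N : ℝ) + 1) = -(1 / ((N : ℝ) + 1)) by ring] at h2
    rw [abs_le]
    constructor <;> [linarith; linarith [one_div_nonneg.mpr (by positivity : (0:ℝ) ≤ (N:ℝ)+1)]]

lemma hasSum_alt_inv_sq :
    HasSum (fun n : ℕ => (-1 : ℝ) ^ n / ((n : ℝ) + 1) ^ 2) (Real.pi ^ 2 / 12) := by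
  have h6 : HasSum (fun n : ℕ => 1 / ((n : ℝ) + 1) ^ 2) (Real.pi ^ 2 / 6) := by
    have h2 := (hasSum_nat_add_iff' (f := fun n : ℕ => 1 / (n : ℝ) ^ 2) 1).mpr hasSum_zeta_two
    simp only [range_one, sum_singleton, Nat.cast_zero] at h2
    norm_num at h2
    convert h2 using 2 with n
    · rfl
    push_cast
    ring
  have h24 : HasSum (fun m : ℕ => (1 : ℝ) / (2 * (m : ℝ) + 2) ^ 2) (Real.pi ^ 2 / 24) := by
    have h := h6.div_const 4
    have e : (fun n : ℕ => 1 / ((n : ℝ) + 1) ^ 2 / 4) = fun m : ℕ => (1 : ℝ) / (2 * (m : ℝ) + 2) ^ 2 := by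
      funext m
      rw [div_div]
      congr 1
      ring
    rw [e] at h
    convert h using 1
    · rfl
    ring
  have hodd : HasSum (fun n : ℕ => if n % 2 = 1 then (1 : ℝ) / ((n : ℝ) + 1) ^ 2 else 0)
      (Real.pi ^ 2 / 24) := by
    have hinj : Function.Injective (fun m : ℕ => 2 * m + 1) := fun a b h => by
      simp only at h
      omega
    rw [← Function.Injective.hasSum_iff hinj (fun x hx => ?_)]
    · have e2 : ((fun n : ℕ => if n % 2 = 1 then (1 : ℝ) / ((n : ℝ) + 1) ^ 2 else 0) ∘ (fun m : ℕ => 2 * m + 1))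
          = fun m : ℕ => (1 : ℝ) / (2 * (m : ℝ) + 2) ^ 2 := by
        funext m
        simp only [Function.comp_apply]
        rw [if_pos (by omega)]
        push_cast
        ring_nf
      rw [e2]
      exact h24
    · simp only [Set.mem_range, not_exists] at hx
      exact if_neg (fun hmod => hx (x / 2) (by omega))
  have hcomb := h6.sub (hodd.mul_left 2)
  have e : (fun n : ℕ => 1 / ((n : ℝ) + 1) ^ 2
      - 2 * (if n % 2 = 1 then (1 : ℝ) / ((n : ℝ) + 1) ^ 2 else 0))
      = fun n : ℕ => (-1 : ℝ) ^ n / ((n : ℝ) + 1) ^ 2 := by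
    funext n
    rcases Nat.even_or_odd n with he | ho
    · have h0 : n % 2 = 0 := Nat.even_iff.mp he
      rw [if_neg (by omega), he.neg_one_pow]
      ring
    · rw [if_pos (Nat.odd_iff.mp ho), ho.neg_one_pow]
      ring
  rw [e] at hcomb
  convert hcomb using 1
  · rfl
  ring

lemma key_reindex (n K : ℕ) :
    ∑ k ∈ Finset.range K, (-1 : ℝ) ^ k / (n + k + 1) = (-1 : ℝ) ^ n * (aaX (n + K) - aaX n) := by
  induction K with
  | zero => simp
  | succ K ih =>
    rw [sum_range_succ, ih, ← add_assoc, aaX_succ]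
    have hnn : (-1 : ℝ) ^ n * (-1 : ℝ) ^ n = 1 := by
      rw [← pow_add]
      exact Even.neg_one_pow ⟨n, rfl⟩
    rw [pow_add]
    push_cast
    linear_combination (-((-1 : ℝ) ^ K / ((n : ℝ) + (K : ℝ) + 1))) * hnn

lemma I1 (L : ℝ) (N : ℕ) :
    2 * ∑ n ∈ Finset.range N, (-1 : ℝ) ^ n * (L - aaX n) ^ 2
      = (L - aaX 0) ^ 2 - (-1 : ℝ) ^ N * (L - aaX N) ^ 2
        + ∑ n ∈ Finset.range N, (2 * (L - aaX n) / (n + 1) - (-1 : ℝ) ^ n / (n + 1) ^ 2) := by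
  induction N with
  | zero => simp
  | succ N ih =>
    rw [sum_range_succ, sum_range_succ, mul_add, ih, aaX_succ, pow_succ]
    have hnn : (-1 : ℝ) ^ N * (-1 : ℝ) ^ N = 1 := by
      rw [← pow_add]
      exact Even.neg_one_pow ⟨N, rfl⟩
    have h2 : (-1 : ℝ) ^ N / ((N : ℝ) + 1) ^ 2 = (-1 : ℝ) ^ N * (1 / ((N : ℝ) + 1)) ^ 2 := by
      rw [div_eq_mul_inv, ← inv_pow, one_div]
    linear_combination (2 * (L - aaX N) * (1 / ((N : ℝ) + 1))
      - (-1 : ℝ) ^ N * (1 / ((N : ℝ) + 1)) ^ 2) * hnn + h2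

lemma I2 (L : ℝ) (N : ℕ) :
    ∑ n ∈ Finset.range N, (L - aaX n) / (n + 1)
      = hhX N * (L - aaX N) + ∑ j ∈ Finset.range N, (-1 : ℝ) ^ j * (hhX (j + 1) / (j + 1)) := by
  induction N with
  | zero => simp [hhX]
  | succ N ih =>
    rw [sum_range_succ, sum_range_succ, ih, aaX_succ, hhX_succ]
    ring

theorem stmt_3 (g : ℕ → ℝ)
    (hg : ∀ n : ℕ,
      Tendsto (fun K => ∑ k ∈ Finset.range K, (-1 : ℝ) ^ k / (n + k + 1)) atTop (nhds (g n))) :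
    Tendsto (fun N => ∑ n ∈ Finset.range N, (-1 : ℝ) ^ n * (g n) ^ 2) atTop
      (nhds (Real.pi ^ 2 / 24)) := by
  have hga : ∀ n : ℕ, g n = (-1 : ℝ) ^ n * (Real.log 2 - aaX n) := by
    intro n
    refine tendsto_nhds_unique (hg n) ?_
    have h1 : Tendsto (fun K => aaX (n + K)) atTop (nhds (Real.log 2)) := by
      refine (tendsto_aaX.comp (tendsto_add_atTop_nat n)).congr fun K => ?_
      simp [Function.comp, Nat.add_comm]
    have h2 := (h1.sub_const (aaX n)).const_mul ((-1 : ℝ) ^ n)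
    exact Tendsto.congr (fun K => (key_reindex n K).symm) h2
  have hsq : ∀ n : ℕ, (g n) ^ 2 = (Real.log 2 - aaX n) ^ 2 := by
    intro n
    rw [hga n, mul_pow, ← pow_mul, mul_comm n 2, pow_mul]
    norm_num
  have hmain : ∀ N : ℕ, ∑ n ∈ Finset.range N, (-1 : ℝ) ^ n * (g n) ^ 2
      = Real.log 2 ^ 2 / 2 - (-1 : ℝ) ^ N * (Real.log 2 - aaX N) ^ 2 / 2
        + hhX N * (Real.log 2 - aaX N)
        + (∑ n ∈ Finset.range N, (-1 : ℝ) ^ n / ((n : ℝ) + 1) ^ 2) / 2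
        + ∑ j ∈ Finset.range N, (-1 : ℝ) ^ j * (hhX j / (j + 1)) := by
    intro N
    have e1 : ∑ n ∈ Finset.range N, (-1 : ℝ) ^ n * (g n) ^ 2
        = ∑ n ∈ Finset.range N, (-1 : ℝ) ^ n * (Real.log 2 - aaX n) ^ 2 :=
      sum_congr rfl fun n _ => by rw [hsq n]
    have hi1 := I1 (Real.log 2) N
    have hsplit : ∑ n ∈ Finset.range N,
        (2 * (Real.log 2 - aaX n) / (n + 1) - (-1 : ℝ) ^ n / (n + 1) ^ 2)
        = 2 * (∑ n ∈ Finset.range N, (Real.log 2 - aaX n) / (n + 1))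
          - ∑ n ∈ Finset.range N, (-1 : ℝ) ^ n / ((n : ℝ) + 1) ^ 2 := by
      rw [sum_sub_distrib, mul_sum]
      congr 1
      exact sum_congr rfl fun n _ => by ring
    have hEsplit : ∑ j ∈ Finset.range N, (-1 : ℝ) ^ j * (hhX (j + 1) / (j + 1))
        = ∑ j ∈ Finset.range N, (-1 : ℝ) ^ j / ((j : ℝ) + 1) ^ 2
          + ∑ j ∈ Finset.range N, (-1 : ℝ) ^ j * (hhX j / (j + 1)) := by
      rw [← sum_add_distrib]
      refine sum_congr rfl fun j _ => ?_
      rw [hhX_succ]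
      have hj : ((j : ℝ) + 1) ≠ 0 := by positivity
      field_simp
      ring
    have haa0 : aaX 0 = 0 := by simp [aaX]
    rw [e1]
    rw [hsplit, I2 (Real.log 2) N, hEsplit, haa0, sub_zero] at hi1
    linarith [hi1]
  have tb : Tendsto (fun N : ℕ => 1 / ((N : ℝ) + 1)) atTop (nhds 0) :=
    tendsto_one_div_add_atTop_nhds_zero_nat
  have t1 : Tendsto (fun N : ℕ => (-1 : ℝ) ^ N * (Real.log 2 - aaX N) ^ 2) atTop (nhds 0) := by
    apply squeeze_zero_norm (a := fun N : ℕ => (1 / ((N : ℝ) + 1)) ^ 2)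
    · intro N
      rw [Real.norm_eq_abs, abs_mul, abs_pow, abs_neg, abs_one, one_pow, one_mul, abs_pow]
      exact pow_le_pow_left₀ (abs_nonneg _) (aaX_bound N) 2
    · simpa using tb.pow 2
  have t2 : Tendsto (fun N : ℕ => hhX N * (Real.log 2 - aaX N)) atTop (nhds 0) := by
    have hc2 := (tendsto_one_div_add_atTop_nhds_zero_nat.cesaro).comp (tendsto_add_atTop_nat 1)
    simp only [Function.comp_def] at hc2
    apply squeeze_zero_norm
      (a := fun N : ℕ => ((N + 1 : ℕ) : ℝ)⁻¹ * ∑ i ∈ Finset.range (N + 1), (1 : ℝ) / (i + 1))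
    · intro N
      rw [Real.norm_eq_abs, abs_mul, abs_of_nonneg (hhX_nonneg N)]
      have h1 : hhX N ≤ hhX (N + 1) := by
        rw [hhX_succ]
        have : (0:ℝ) ≤ 1 / ((N:ℝ) + 1) := by positivity
        linarith
      calc hhX N * |Real.log 2 - aaX N| ≤ hhX (N + 1) * (1 / ((N : ℝ) + 1)) :=
            mul_le_mul h1 (aaX_bound N) (abs_nonneg _) (hhX_nonneg _)
        _ = ((N + 1 : ℕ) : ℝ)⁻¹ * ∑ i ∈ Finset.range (N + 1), (1 : ℝ) / (i + 1) := by
            rw [show (∑ i ∈ Finset.range (N + 1), (1 : ℝ) / (i + 1)) = hhX (N + 1) from rfl]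
            push_cast
            ring
    · exact hc2
  have tQ := hasSum_alt_inv_sq.tendsto_sum_nat
  have tE2 : Tendsto (fun N => ∑ j ∈ Finset.range N, (-1 : ℝ) ^ j * (hhX j / (j + 1))) atTop
      (nhds (-(Real.log 2 ^ 2 / 2))) := by
    have hshift : ∀ N : ℕ, ∑ j ∈ Finset.range (N + 1), (-1 : ℝ) ^ j * (hhX j / (j + 1))
        = -∑ i ∈ Finset.range N, (-1 : ℝ) ^ i * (hhX (i + 1) / (i + 2)) := by
      intro N
      rw [Finset.sum_range_succ']
      have h0 : hhX 0 = 0 := by simp [hhX]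
      rw [h0]
      rw [← Finset.sum_neg_distrib]
      simp only [pow_zero, Nat.cast_zero, zero_add, div_one, mul_zero, add_zero]
      refine sum_congr rfl fun i _ => ?_
      rw [pow_succ]
      push_cast
      ring
    have h1 : Tendsto (fun N : ℕ => ∑ j ∈ Finset.range (N + 1), (-1 : ℝ) ^ j * (hhX j / (j + 1)))
        atTop (nhds (-(Real.log 2 ^ 2 / 2))) := by
      rw [show (fun N : ℕ => ∑ j ∈ Finset.range (N + 1), (-1 : ℝ) ^ j * (hhX j / (j + 1)))
          = fun N : ℕ => -∑ i ∈ Finset.range N, (-1 : ℝ) ^ i * (hhX (i + 1) / (i + 2))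
        from funext hshift]
      exact tendsto_eulerX.neg
    exact (tendsto_add_atTop_iff_nat 1).mp h1
  have hfinal := ((((tendsto_const_nhds (x := Real.log 2 ^ 2 / 2) (f := atTop)).sub
    (t1.div_const 2)).add t2).add (tQ.div_const 2)).add tE2
  have hv : Real.pi ^ 2 / 24
      = Real.log 2 ^ 2 / 2 - 0 / 2 + 0 + Real.pi ^ 2 / 12 / 2 + -(Real.log 2 ^ 2 / 2) := by ring
  rw [hv]
  exact Tendsto.congr (fun N => (hmain N).symm) hfinal
end

section
/- For all x in [0,1], ∫₀¹ ln(1+xy)/(1+y) dy = Li₂((1-x)/2) - Li₂(-x) + (ln 2)²/2 - π²/12. -/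
/-- The dilogarithm Li₂(z) = ∑_{n=1}^∞ zⁿ/n². -/
noncomputable def Li2 (z : ℝ) : ℝ := ∑' n : ℕ, z ^ (n + 1) / ((n : ℝ) + 1) ^ 2

open MeasureTheory intervalIntegral Real Set Filter
open scoped Topology

lemma hasSum_inv_sq : HasSum (fun n : ℕ => 1 / ((n:ℝ)+1)^2) (π^2/6) := by
  have h := hasSum_zeta_two
  have h2 := (hasSum_nat_add_iff (f := fun n : ℕ => (1:ℝ)/(n:ℝ)^2) 1).mpr (by simpa using h)
  simpa [add_comm] using h2

lemma summable_li2 (z : ℝ) (hz : |z| ≤ 1) :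
    Summable (fun n : ℕ => z^(n+1)/((n:ℝ)+1)^2) := by
  apply Summable.of_abs
  apply Summable.of_nonneg_of_le (fun n => abs_nonneg _) (fun n => ?_) hasSum_inv_sq.summable
  rw [abs_div, abs_pow]
  have h1 : (0:ℝ) < ((n:ℝ)+1)^2 := by positivity
  rw [abs_of_pos h1]
  have : |z|^(n+1) ≤ 1 := pow_le_one₀ (abs_nonneg z) hz
  gcongr

lemma ae_ne_01 : ∀ᵐ t : ℝ, t ≠ 0 ∧ t ≠ 1 := by
  have h : volume ({0, 1} : Set ℝ) = 0 := (Set.toFinite _).measure_zero _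
  rw [ae_iff]
  convert h using 2
  ext t
  simp [not_and_or, or_comm]
  tauto

lemma core (a b : ℝ) (ha : -1 ≤ a) (hb : b ≤ 1) (hab : a ≤ b) :
    ∫ t in Set.Ioc a b, (-Real.log (1 - t) / t) =
      ∑' n : ℕ, (b^(n+1) - a^(n+1))/((n:ℝ)+1)^2 := by
  have hInt : ∀ n : ℕ, Integrable (fun t : ℝ => t^n/((n:ℝ)+1))
      (volume.restrict (Set.Ioc a b)) :=
    fun n => ((continuous_pow n).div_const _).integrableOn_Ioc
  have habs : ∀ n : ℕ, ∀ t : ℝ, ‖t^n/((n:ℝ)+1)‖ = |t|^n/((n:ℝ)+1) := by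
    intro n t
    rw [Real.norm_eq_abs, abs_div, abs_pow, abs_of_pos (by positivity : (0:ℝ) < (n:ℝ)+1)]
  have hnorm2 : ∀ n : ℕ, ∫ t in Set.Ioc (-1:ℝ) 1, ‖t^n/((n:ℝ)+1)‖ = 2/((n:ℝ)+1)^2 := by
    intro n
    simp_rw [habs n]
    rw [← intervalIntegral.integral_of_le (by norm_num : (-1:ℝ) ≤ 1)]
    rw [intervalIntegral.integral_div]
    have hsplit : ∫ t in (-1:ℝ)..1, |t|^n =
        (∫ t in (-1:ℝ)..0, |t|^n) + ∫ t in (0:ℝ)..1, |t|^n := by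
      rw [intervalIntegral.integral_add_adjacent_intervals] <;>
        exact ((continuous_abs.pow n).intervalIntegrable _ _)
    have h1 : ∫ t in (0:ℝ)..1, |t|^n = 1/((n:ℝ)+1) := by
      rw [intervalIntegral.integral_congr (g := fun t => t^n)
        (fun t ht => by rw [Set.uIcc_of_le (by norm_num : (0:ℝ) ≤ 1)] at ht
                        simp [abs_of_nonneg ht.1])]
      simp [integral_pow]
    have h2 : ∫ t in (-1:ℝ)..0, |t|^n = 1/((n:ℝ)+1) := by
      rw [intervalIntegral.integral_congr (g := fun t => (-t)^n)
        (fun t ht => by rw [Set.uIcc_of_le (by norm_num : (-1:ℝ) ≤ 0)] at ht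
                        simp [abs_of_nonpos ht.2])]
      rw [intervalIntegral.integral_comp_neg (fun t => t^n)]
      norm_num [integral_pow]
    rw [hsplit, h1, h2, ← add_div, div_div, sq]
    norm_num
  have hSum : Summable (fun n : ℕ => ∫ t in Set.Ioc a b, ‖t^n/((n:ℝ)+1)‖) := by
    apply Summable.of_nonneg_of_le
      (fun n => integral_nonneg (fun t => norm_nonneg _))
      (fun n => ?_) (hasSum_inv_sq.summable.mul_left 2)
    calc ∫ t in Set.Ioc a b, ‖t^n/((n:ℝ)+1)‖
        ≤ ∫ t in Set.Ioc (-1:ℝ) 1, ‖t^n/((n:ℝ)+1)‖ := by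
          apply setIntegral_mono_set
            (((continuous_pow n).div_const _).norm.integrableOn_Ioc)
            (Filter.Eventually.of_forall fun t => norm_nonneg _)
          exact HasSubset.Subset.eventuallyLE (Set.Ioc_subset_Ioc ha hb)
      _ = 2 * (1/((n:ℝ)+1)^2) := by rw [hnorm2 n]; ring
  have key := MeasureTheory.integral_tsum_of_summable_integral_norm hInt hSum
  have hpt : ∀ᵐ t ∂(volume.restrict (Set.Ioc a b)),
      (∑' n : ℕ, t^n/((n:ℝ)+1)) = -Real.log (1 - t) / t := by
    filter_upwards [ae_restrict_of_ae ae_ne_01, ae_restrict_mem measurableSet_Ioc]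
      with t ht hmem
    have h01 : |t| < 1 := abs_lt.mpr ⟨lt_of_le_of_lt ha hmem.1,
      lt_of_le_of_ne (hmem.2.trans hb) ht.2⟩
    have hs := (hasSum_pow_div_log_of_abs_lt_one h01).mul_left t⁻¹
    have heq : ∀ n : ℕ, t⁻¹ * (t^(n+1)/((n:ℝ)+1)) = t^n/((n:ℝ)+1) := by
      intro n
      rw [pow_succ]
      field_simp [ht.1]
    simp only [heq] at hs
    rw [hs.tsum_eq, inv_mul_eq_div, neg_div]
  rw [← integral_congr_ae hpt, ← key]
  apply tsum_congr
  intro n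
  rw [← intervalIntegral.integral_of_le hab, intervalIntegral.integral_div, integral_pow]
  rw [div_div, sq]

lemma li2_eq_int_nonneg (z : ℝ) (h0 : 0 ≤ z) (h1 : z ≤ 1) :
    Li2 z = ∫ t in (0:ℝ)..z, -Real.log (1 - t) / t := by
  rw [intervalIntegral.integral_of_le h0, core 0 z (by norm_num) h1 h0]
  unfold Li2
  apply tsum_congr
  intro n
  rw [zero_pow (Nat.succ_ne_zero n), sub_zero]

lemma li2_eq_int_neg (z : ℝ) (h0 : -1 ≤ z) (h1 : z ≤ 0) :
    Li2 z = ∫ t in (0:ℝ)..z, -Real.log (1 - t) / t := by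
  rw [intervalIntegral.integral_symm, intervalIntegral.integral_of_le h1,
    core z 0 h0 (by norm_num) h1, ← tsum_neg]
  apply tsum_congr
  intro n
  rw [zero_pow (Nat.succ_ne_zero n), zero_sub, neg_div, neg_neg]

lemma li2_one : Li2 1 = π^2/6 := by
  unfold Li2
  simp only [one_pow]
  exact hasSum_inv_sq.tsum_eq


lemma neg_log_le_rpow {u : ℝ} (hu : 0 < u) : -Real.log u ≤ 2 * u ^ (-(1/2):ℝ) := by
  have h1 : Real.log (u ^ ((1/2):ℝ)) = (1/2) * Real.log u := Real.log_rpow hu _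
  have h2 : (0:ℝ) < u ^ ((1/2):ℝ) := Real.rpow_pos_of_pos hu _
  have h3 : Real.log ((u ^ ((1/2):ℝ))⁻¹) ≤ (u ^ ((1/2):ℝ))⁻¹ - 1 :=
    Real.log_le_sub_one_of_pos (by positivity)
  rw [Real.log_inv, h1] at h3
  have h4 : u ^ (-(1/2):ℝ) = (u ^ ((1/2):ℝ))⁻¹ := by
    rw [Real.rpow_neg hu.le]
  rw [h4]
  nlinarith [inv_pos.mpr h2]

lemma intervalIntegrable_pow_neg_log (n : ℕ) :
    IntervalIntegrable (fun x:ℝ => x^n * (-Real.log x)) volume 0 (1/2) := by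
  have hbnd : IntervalIntegrable (fun u:ℝ => 2 * u ^ (-(1/2):ℝ)) volume 0 (1/2) :=
    (intervalIntegral.intervalIntegrable_rpow' (by norm_num)).const_mul 2
  apply hbnd.mono_fun'
  · exact ((measurable_id.pow_const n).mul Real.measurable_log.neg).aestronglyMeasurable
  · rw [Set.uIoc_of_le (by norm_num : (0:ℝ) ≤ 1/2)]
    filter_upwards [ae_restrict_mem measurableSet_Ioc] with u hu
    have hu0 : 0 < u := hu.1
    have hlog : 0 ≤ -Real.log u := by
      simp only [neg_nonneg]
      exact Real.log_nonpos hu0.le (by linarith [hu.2])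
    rw [Real.norm_eq_abs, abs_mul, abs_pow, abs_of_pos hu0, abs_of_nonneg hlog]
    calc u^n * (-Real.log u) ≤ 1 * (-Real.log u) := by
          apply mul_le_mul_of_nonneg_right (pow_le_one₀ hu0.le (by linarith [hu.2])) hlog
      _ = -Real.log u := one_mul _
      _ ≤ 2 * u ^ (-(1/2):ℝ) := neg_log_le_rpow hu0

lemma integral_pow_neg_log (n : ℕ) :
    ∫ x in (0:ℝ)..(1/2), x^n * (-Real.log x)
      = (1/2:ℝ)^(n+1) * Real.log 2/((n:ℝ)+1) + (1/2:ℝ)^(n+1)/((n:ℝ)+1)^2 := by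
  set F : ℝ → ℝ := fun u => (u^(n+1) - ((n:ℝ)+1) * (u^(n+1) * Real.log u))/((n:ℝ)+1)^2
    with hF
  have hderiv : ∀ u ∈ Set.Ioo (0:ℝ) (1/2), HasDerivAt F (u^n * (-Real.log u)) u := by
    intro u hu
    have hu0 : 0 < u := hu.1
    have h1 : HasDerivAt (fun u:ℝ => u^(n+1)) (((n:ℝ)+1)*u^n) u := by
      simpa using hasDerivAt_pow (n+1) u
    have h2 : HasDerivAt Real.log u⁻¹ u := Real.hasDerivAt_log hu0.ne'
    have h3 : HasDerivAt (fun u:ℝ => u^(n+1) * Real.log u)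
        (((n:ℝ)+1)*u^n * Real.log u + u^(n+1) * u⁻¹) u := h1.mul h2
    have h4 := ((h1.sub (h3.const_mul ((n:ℝ)+1))).div_const (((n:ℝ)+1)^2))
    refine h4.congr_deriv ?_
    symm
    have hn : ((n:ℝ)+1) ≠ 0 := by positivity
    field_simp
    ring
  have htend0 : Tendsto F (𝓝[>] (0:ℝ)) (𝓝 0) := by
    have hlog : Tendsto (fun u:ℝ => Real.log u * u ^ (((n:ℝ)+1))) (𝓝[>] (0:ℝ)) (𝓝 0) :=
      tendsto_log_mul_rpow_nhdsGT_zero (by positivity)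
    have hlog2 : Tendsto (fun u:ℝ => u^(n+1) * Real.log u) (𝓝[>] (0:ℝ)) (𝓝 0) := by
      apply hlog.congr'
      filter_upwards [self_mem_nhdsWithin] with u (hu : 0 < u)
      rw [show ((n:ℝ)+1) = ((n+1 : ℕ):ℝ) by push_cast; ring, Real.rpow_natCast, mul_comm]
    have hpow : Tendsto (fun u:ℝ => u^(n+1)) (𝓝[>] (0:ℝ)) (𝓝 0) := by
      have := (continuous_pow (n+1)).tendsto (0:ℝ)
      rw [zero_pow (Nat.succ_ne_zero n)] at this
      exact this.mono_left nhdsWithin_le_nhds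
    have := (hpow.sub (hlog2.const_mul ((n:ℝ)+1))).div_const (((n:ℝ)+1)^2)
    simpa using this
  have htend1 : Tendsto F (𝓝[<] (1/2:ℝ)) (𝓝 (F (1/2))) := by
    apply ContinuousAt.continuousWithinAt
    have : ContinuousAt Real.log (1/2) := Real.continuousAt_log (by norm_num)
    fun_prop (disch := norm_num)
  rw [intervalIntegral.integral_eq_sub_of_hasDerivAt_of_tendsto (by norm_num)
    hderiv (intervalIntegrable_pow_neg_log n) htend0 htend1]
  have hn : ((n:ℝ)+1) ≠ 0 := by positivity
  simp only [hF]
  rw [show Real.log ((1:ℝ)/2) = -Real.log 2 by rw [one_div, Real.log_inv]]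
  field_simp
  ring

lemma li2_half : Li2 (1/2) = π^2/12 - (Real.log 2)^2/2 := by
  have hB1 : ∫ t in Set.Ioc (1/2:ℝ) 1, (-Real.log (1 - t) / t) = π^2/6 - Li2 (1/2) := by
    rw [core (1/2) 1 (by norm_num) le_rfl (by norm_num)]
    have hs2 : Summable (fun n : ℕ => (1/2:ℝ)^(n+1)/((n:ℝ)+1)^2) :=
      summable_li2 (1/2) (by rw [abs_of_pos] <;> norm_num)
    rw [show (fun n : ℕ => ((1:ℝ)^(n+1) - (1/2)^(n+1))/((n:ℝ)+1)^2)
        = fun n : ℕ => 1/((n:ℝ)+1)^2 - (1/2:ℝ)^(n+1)/((n:ℝ)+1)^2 by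
      funext n; rw [one_pow, sub_div]]
    rw [Summable.tsum_sub hasSum_inv_sq.summable hs2, hasSum_inv_sq.tsum_eq]
    rfl
  -- substitution t = 1 - x
  have hB2 : ∫ t in Set.Ioc (1/2:ℝ) 1, (-Real.log (1 - t) / t)
      = ∫ x in (0:ℝ)..(1/2), -Real.log x / (1-x) := by
    rw [← intervalIntegral.integral_of_le (by norm_num : (1/2:ℝ) ≤ 1)]
    rw [show ∫ x in (0:ℝ)..(1/2), -Real.log x / (1-x)
        = ∫ x in (0:ℝ)..(1/2), (fun t => -Real.log (1-t)/t) (1 - x) by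
      apply intervalIntegral.integral_congr; intro x _; norm_num]
    rw [intervalIntegral.integral_comp_sub_left (fun t => -Real.log (1-t)/t) 1]
    norm_num

  have hvals : ∀ n : ℕ, ∫ x in Set.Ioc (0:ℝ) (1/2), x^n * (-Real.log x)
      = (1/2:ℝ)^(n+1) * Real.log 2/((n:ℝ)+1) + (1/2:ℝ)^(n+1)/((n:ℝ)+1)^2 := fun n => by
    rw [← intervalIntegral.integral_of_le (by norm_num : (0:ℝ) ≤ 1/2)]
    exact integral_pow_neg_log n
  have hnn : ∀ n : ℕ, ∀ x ∈ Set.Ioc (0:ℝ) (1/2), 0 ≤ x^n * (-Real.log x) := by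
    intro n x hx
    have : Real.log x ≤ 0 := Real.log_nonpos hx.1.le (by linarith [hx.2])
    have := pow_nonneg hx.1.le n
    nlinarith
  have hInt : ∀ n : ℕ, Integrable (fun x:ℝ => x^n * (-Real.log x))
      (volume.restrict (Set.Ioc (0:ℝ) (1/2))) := by
    intro n
    have h := (intervalIntegrable_pow_neg_log n).1
    exact h
  have hSum : Summable (fun n : ℕ => ∫ x in Set.Ioc (0:ℝ) (1/2), ‖x^n * (-Real.log x)‖) := by
    apply Summable.of_nonneg_of_le (fun n => integral_nonneg (fun x => norm_nonneg _))
      (fun n => ?_)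
      (((summable_geometric_of_lt_one (by norm_num : (0:ℝ) ≤ 1/2)
        (by norm_num)).mul_left (Real.log 2 + 1)))
    rw [setIntegral_congr_fun measurableSet_Ioc
      (fun x hx => by rw [Real.norm_eq_abs, abs_of_nonneg (hnn n x hx)]), hvals n]
    have e1 : (1/2:ℝ)^(n+1) ≤ (1/2)^n := by
      rw [pow_succ]
      nlinarith [pow_pos (by norm_num : (0:ℝ) < 1/2) n]
    have e2 : (0:ℝ) < (1/2:ℝ)^(n+1) := by positivity
    have hl2 : (0:ℝ) ≤ Real.log 2 := Real.log_nonneg one_le_two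
    have hn1 : (1:ℝ) ≤ (n:ℝ)+1 := by
      have := Nat.cast_nonneg (α:=ℝ) n
      linarith
    have d1 : (1/2:ℝ)^(n+1) * Real.log 2/((n:ℝ)+1) ≤ (1/2:ℝ)^(n+1) * Real.log 2 :=
      div_le_self (by positivity) hn1
    have d2 : (1/2:ℝ)^(n+1)/((n:ℝ)+1)^2 ≤ (1/2:ℝ)^(n+1) :=
      div_le_self (by positivity) (by nlinarith)
    nlinarith
  have key := MeasureTheory.integral_tsum_of_summable_integral_norm hInt hSum
  have hpt : ∫ x in Set.Ioc (0:ℝ) (1/2), -Real.log x/(1-x)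
      = ∫ x in Set.Ioc (0:ℝ) (1/2), (∑' n : ℕ, x^n * (-Real.log x)) := by
    apply setIntegral_congr_fun measurableSet_Ioc
    intro x hx
    have hx1 : x < 1 := by linarith [hx.2]
    have hgs := (hasSum_geometric_of_lt_one hx.1.le hx1).mul_right (-Real.log x)
    show -Real.log x/(1-x) = ∑' n : ℕ, x^n * (-Real.log x)
    rw [hgs.tsum_eq, inv_mul_eq_div, neg_div]
  have hB3 : ∫ x in (0:ℝ)..(1/2), -Real.log x / (1-x)
      = ∑' n : ℕ, ((1/2:ℝ)^(n+1) * Real.log 2/((n:ℝ)+1) + (1/2:ℝ)^(n+1)/((n:ℝ)+1)^2) := by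
    rw [intervalIntegral.integral_of_le (by norm_num : (0:ℝ) ≤ 1/2), hpt, ← key]
    exact tsum_congr hvals
  have hls : HasSum (fun n : ℕ => (1/2:ℝ)^(n+1)/((n:ℝ)+1)) (Real.log 2) := by
    have h := hasSum_pow_div_log_of_abs_lt_one
      (x := (1/2:ℝ)) (by rw [abs_of_pos] <;> norm_num)
    have : -Real.log (1 - 1/2 : ℝ) = Real.log 2 := by
      rw [show (1 - 1/2 : ℝ) = 2⁻¹ by norm_num, Real.log_inv, neg_neg]
    rwa [this] at h
  have hs2 : Summable (fun n : ℕ => (1/2:ℝ)^(n+1)/((n:ℝ)+1)^2) :=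
    summable_li2 (1/2) (by rw [abs_of_pos] <;> norm_num)
  have htsum : ∑' n : ℕ, ((1/2:ℝ)^(n+1) * Real.log 2/((n:ℝ)+1) + (1/2:ℝ)^(n+1)/((n:ℝ)+1)^2)
      = (Real.log 2)^2 + Li2 (1/2) := by
    rw [show (fun n : ℕ => ((1/2:ℝ)^(n+1) * Real.log 2/((n:ℝ)+1) + (1/2:ℝ)^(n+1)/((n:ℝ)+1)^2))
        = fun n : ℕ => Real.log 2 * ((1/2:ℝ)^(n+1)/((n:ℝ)+1)) + (1/2:ℝ)^(n+1)/((n:ℝ)+1)^2 by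
      funext n; ring]
    rw [Summable.tsum_add (hls.mul_left (Real.log 2)).summable hs2,
      (hls.mul_left (Real.log 2)).tsum_eq, sq]
    rfl
  rw [hB2, hB3, htsum] at hB1
  linarith


theorem stmt_6 (x : ℝ) (hx : x ∈ Set.Icc (0:ℝ) 1) :
    (∫ y in (0:ℝ)..1, Real.log (1 + x * y) / (1 + y))
      = Li2 ((1 - x) / 2) - Li2 (-x) + (Real.log 2) ^ 2 / 2 - Real.pi ^ 2 / 12 := by

  obtain ⟨hx0, hx1⟩ := hx
  have hA : ∀ y ∈ Set.Ioc (0:ℝ) 1, Real.log (1 + x*y)/(1+y)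
      = ∫ t in Set.Ioc (0:ℝ) x, y/((1+t*y)*(1+y)) := by
    intro y hy
    have hy0 : 0 < y := hy.1
    have hy1 : y ≤ 1 := hy.2
    rw [← intervalIntegral.integral_of_le hx0]
    have hderiv : ∀ t ∈ Set.uIcc (0:ℝ) x,
        HasDerivAt (fun t => Real.log (1+t*y)/(1+y)) (y/((1+t*y)*(1+y))) t := by
      intro t ht
      rw [Set.uIcc_of_le hx0] at ht
      have hty : (0:ℝ) < 1 + t*y := by nlinarith [ht.1]
      have h1 : HasDerivAt (fun t:ℝ => 1 + t*y) y t := by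
        simpa using ((hasDerivAt_id t).mul_const y).const_add 1
      have h2 := ((Real.hasDerivAt_log hty.ne').comp t h1).div_const (1+y)
      refine h2.congr_deriv ?_
      symm
      field_simp
    have hint : IntervalIntegrable (fun t => y/((1+t*y)*(1+y))) volume 0 x := by
      apply ContinuousOn.intervalIntegrable
      apply ContinuousOn.div continuousOn_const
      · fun_prop
      · intro t ht
        rw [Set.uIcc_of_le hx0] at ht
        nlinarith [mul_nonneg ht.1 hy0.le, hy0]
    rw [intervalIntegral.integral_eq_sub_of_hasDerivAt hderiv hint]
    norm_num
  have hIntK : Integrable (Function.uncurry (fun y t : ℝ => y/((1+t*y)*(1+y))))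
      ((volume.restrict (Set.Ioc (0:ℝ) 1)).prod (volume.restrict (Set.Ioc (0:ℝ) x))) := by
    rw [Measure.prod_restrict]
    apply MeasureTheory.IntegrableOn.mono_set
      (t := Set.Icc (0:ℝ) 1 ×ˢ Set.Icc (0:ℝ) x)
    · apply ContinuousOn.integrableOn_compact (isCompact_Icc.prod isCompact_Icc)
      apply ContinuousOn.div (by fun_prop) (by fun_prop)
      rintro ⟨y, t⟩ hp
      rw [Set.mem_prod] at hp
      obtain ⟨⟨hy0, hy1⟩, ⟨ht0, ht1⟩⟩ := hp
      simp only [Function.uncurry]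
      dsimp only at hy0 hy1 ht0 ht1
      nlinarith [mul_nonneg ht0 hy0]
    · exact Set.prod_mono Set.Ioc_subset_Icc_self Set.Ioc_subset_Icc_self
  have hswap := MeasureTheory.integral_integral_swap
    (μ := volume.restrict (Set.Ioc (0:ℝ) 1)) (ν := volume.restrict (Set.Ioc (0:ℝ) x))
    hIntK
  have hC : ∀ᵐ t ∂(volume.restrict (Set.Ioc (0:ℝ) x)),
      (∫ y in Set.Ioc (0:ℝ) 1, y/((1+t*y)*(1+y)))
        = Real.log ((1+t)/2)/(1-t) + Real.log (1+t)/t := by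
    filter_upwards [ae_restrict_of_ae ae_ne_01, ae_restrict_mem measurableSet_Ioc]
      with t ht hmem
    have ht0 : 0 < t := hmem.1
    have ht1 : (1:ℝ) ≠ t := fun h => ht.2 h.symm
    have htx : t ≤ 1 := hmem.2.trans hx1
    rw [← intervalIntegral.integral_of_le (zero_le_one)]
    have hderiv : ∀ y ∈ Set.uIcc (0:ℝ) 1, HasDerivAt
        (fun y => (Real.log (1+t*y)/t - Real.log (1+y))/(1-t)) (y/((1+t*y)*(1+y))) y := by
      intro y hy
      rw [Set.uIcc_of_le zero_le_one] at hy
      have hty : (0:ℝ) < 1 + t*y := by nlinarith [hy.1]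
      have hy1 : (0:ℝ) < 1 + y := by linarith [hy.1]
      have h1 : HasDerivAt (fun y:ℝ => 1 + t*y) t y := by
        simpa using ((hasDerivAt_id y).const_mul t).const_add 1
      have h1' : HasDerivAt (fun y:ℝ => 1 + y) 1 y := by
        simpa using (hasDerivAt_id y).const_add 1
      have hlog1 := (Real.hasDerivAt_log hty.ne').comp y h1
      have hlog2 := (Real.hasDerivAt_log hy1.ne').comp y h1'
      have h4 := ((hlog1.div_const t).sub hlog2).div_const (1-t)
      refine h4.congr_deriv ?_
      symm
      have h1t : (1:ℝ) - t ≠ 0 := sub_ne_zero.mpr ht1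
      field_simp [ht0.ne', hy1.ne', (show (1:ℝ) + y*t ≠ 0 by nlinarith)]
      ring
    have hint : IntervalIntegrable (fun y => y/((1+t*y)*(1+y))) volume 0 1 := by
      apply ContinuousOn.intervalIntegrable
      apply ContinuousOn.div (by fun_prop) (by fun_prop)
      intro y hy
      rw [Set.uIcc_of_le zero_le_one] at hy
      nlinarith [mul_nonneg ht0.le hy.1, hy.1]
    rw [intervalIntegral.integral_eq_sub_of_hasDerivAt hderiv hint]
    have h1t : (1:ℝ) - t ≠ 0 := sub_ne_zero.mpr ht1
    rw [show Real.log ((1+t)/2) = Real.log (1+t) - Real.log 2 from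
      Real.log_div (by positivity) two_ne_zero]
    simp only [mul_one, mul_zero, add_zero, Real.log_one]
    norm_num
    field_simp
    ring
  have hbnd1 : ∀ t ∈ Set.Ioc (0:ℝ) x, ‖Real.log ((1+t)/2)/(1-t)‖ ≤ 1 := by
    intro t htm
    have h0 : 0 < t := htm.1
    have ht1 : t ≤ 1 := htm.2.trans hx1
    by_cases h : t = 1
    · subst h
      norm_num
    · have hlt : t < 1 := lt_of_le_of_ne ht1 h
      have key : |Real.log ((1+t)/2)| ≤ 1 - t := by
        have hneg : Real.log ((1+t)/2) ≤ 0 := Real.log_nonpos (by linarith) (by linarith)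
        rw [abs_of_nonpos hneg]
        have hh := Real.log_le_sub_one_of_pos (show (0:ℝ) < ((1+t)/2)⁻¹ by positivity)
        rw [Real.log_inv] at hh
        have hinv : ((1+t)/2:ℝ)⁻¹ - 1 = (1-t)/(1+t) := by
          field_simp
          ring
        have hfr : (1-t)/(1+t) ≤ 1-t := by
          rw [div_le_iff₀ (by linarith)]
          nlinarith
        linarith
      rw [Real.norm_eq_abs, abs_div, abs_of_pos (show (0:ℝ) < 1 - t by linarith)]
      rw [div_le_one (by linarith)]
      exact key
  have hbnd2 : ∀ t ∈ Set.Ioc (0:ℝ) x, ‖Real.log (1+t)/t‖ ≤ 1 := by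
    intro t htm
    have h0 : 0 < t := htm.1
    have hub : Real.log (1+t) ≤ t := by
      have := Real.log_le_sub_one_of_pos (show (0:ℝ) < 1+t by linarith)
      linarith
    have hlb : 0 ≤ Real.log (1+t) := Real.log_nonneg (by linarith)
    rw [Real.norm_eq_abs, abs_div, abs_of_nonneg hlb, abs_of_pos h0, div_le_one h0]
    exact hub
  have hint1 : IntegrableOn (fun t:ℝ => Real.log ((1+t)/2)/(1-t)) (Set.Ioc (0:ℝ) x) volume := by
    apply Integrable.mono' (g := fun _ => (1:ℝ)) ((integrableOn_const_iff).mpr (Or.inr measure_Ioc_lt_top))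
    · exact ((Real.measurable_log.comp ((measurable_const.add measurable_id).div_const 2)).div
        (measurable_const.sub measurable_id)).aestronglyMeasurable
    · filter_upwards [ae_restrict_mem measurableSet_Ioc] with t htm using hbnd1 t htm
  have hint2 : IntegrableOn (fun t:ℝ => Real.log (1+t)/t) (Set.Ioc (0:ℝ) x) volume := by
    apply Integrable.mono' (g := fun _ => (1:ℝ)) ((integrableOn_const_iff).mpr (Or.inr measure_Ioc_lt_top))
    · exact ((Real.measurable_log.comp (measurable_const.add measurable_id)).div
        measurable_id).aestronglyMeasurable
    · filter_upwards [ae_restrict_mem measurableSet_Ioc] with t htm using hbnd2 t htm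
  -- the two elementary integrals
  have hmain : IntegrableOn (fun u:ℝ => -Real.log (1-u)/u) (Set.Ioc (0:ℝ) (1/2)) volume := by
    apply Integrable.mono' (g := fun _ => (2:ℝ)) ((integrableOn_const_iff).mpr (Or.inr measure_Ioc_lt_top))
    · exact ((Real.measurable_log.comp (measurable_const.sub measurable_id)).neg.div
        measurable_id).aestronglyMeasurable
    · filter_upwards [ae_restrict_mem measurableSet_Ioc] with u hu
      have hu0 : 0 < u := hu.1
      have hu2 : u ≤ 1/2 := hu.2
      have hpos : (0:ℝ) < 1 - u := by linarith
      have hnn : 0 ≤ -Real.log (1-u) := by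
        simp only [neg_nonneg]
        exact Real.log_nonpos (by linarith) (by linarith)
      have hub : -Real.log (1-u) ≤ 2*u := by
        have hh := Real.log_le_sub_one_of_pos (show (0:ℝ) < (1-u)⁻¹ by positivity)
        rw [Real.log_inv] at hh
        have : (1-u:ℝ)⁻¹ - 1 = u/(1-u) := by field_simp; ring
        rw [this] at hh
        have : u/(1-u) ≤ 2*u := by
          rw [div_le_iff₀ hpos]
          nlinarith
        linarith
      rw [Real.norm_eq_abs, abs_div, abs_of_nonneg hnn, abs_of_pos hu0, div_le_iff₀ hu0]
      nlinarith
  have hII : ∀ a b : ℝ, Set.uIoc a b ⊆ Set.Ioc (0:ℝ) (1/2) →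
      IntervalIntegrable (fun u:ℝ => -Real.log (1-u)/u) volume a b :=
    fun a b h => intervalIntegrable_iff.mpr (hmain.mono_set h)
  have hx2 : (1-x)/2 ≤ 1/2 := by linarith
  have hx2' : (0:ℝ) ≤ (1-x)/2 := by linarith
  have hf1 : ∫ t in (0:ℝ)..x, Real.log ((1+t)/2)/(1-t) = Li2 ((1-x)/2) - Li2 (1/2) := by
    have hcongr : ∀ t:ℝ, Real.log ((1+t)/2)/(1-t)
        = (-(1/2:ℝ)) * ((fun u => -Real.log (1-u)/u) ((-(1/2:ℝ))*t + 1/2)) := by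
      intro t
      simp only
      rw [show (-(1/2:ℝ))*t + 1/2 = (1-t)/2 by ring, show (1:ℝ) - (1-t)/2 = (1+t)/2 by ring]
      by_cases h : t = 1
      · subst h
        norm_num
      · have h1t : (1:ℝ) - t ≠ 0 := sub_ne_zero.mpr (fun hh => h hh.symm)
        field_simp
    rw [intervalIntegral.integral_congr (fun t _ => hcongr t),
      intervalIntegral.integral_const_mul,
      intervalIntegral.integral_comp_mul_add (fun u => -Real.log (1-u)/u)
        (show (-(1/2):ℝ) ≠ 0 by norm_num) (1/2)]
    rw [show (-(1/2:ℝ))*0 + 1/2 = 1/2 by ring, show (-(1/2:ℝ))*x + 1/2 = (1-x)/2 by ring]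
    rw [smul_eq_mul]
    have hadj := intervalIntegral.integral_add_adjacent_intervals
      (hII (1/2) 0 (by rw [Set.uIoc_comm, Set.uIoc_of_le (by norm_num)]))
      (hII 0 ((1-x)/2) (by rw [Set.uIoc_of_le hx2']; exact Set.Ioc_subset_Ioc_right hx2))
    have hval : ∫ u in (1/2:ℝ)..((1-x)/2), -Real.log (1-u)/u
        = Li2 ((1-x)/2) - Li2 (1/2) := by
      rw [← hadj, intervalIntegral.integral_symm,
        ← li2_eq_int_nonneg ((1-x)/2) hx2' (by linarith),
        ← li2_eq_int_nonneg (1/2) (by norm_num) (by norm_num)]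
      ring
    rw [hval, show ((-(1/2):ℝ))⁻¹ = -2 by norm_num]
    ring
  have hf2 : ∫ t in (0:ℝ)..x, Real.log (1+t)/t = - Li2 (-x) := by
    have hcongr2 : ∀ t:ℝ, Real.log (1+t)/t = (fun u => -Real.log (1-u)/u) (-t) := by
      intro t
      simp only
      rw [sub_neg_eq_add, neg_div_neg_eq]
    rw [intervalIntegral.integral_congr (fun t _ => hcongr2 t),
      intervalIntegral.integral_comp_neg (fun u => -Real.log (1-u)/u),
      show -(0:ℝ) = 0 by ring, intervalIntegral.integral_symm,
      ← li2_eq_int_neg (-x) (by linarith) (by linarith)]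
  calc (∫ y in (0:ℝ)..1, Real.log (1 + x * y) / (1 + y))
      = ∫ y in Set.Ioc (0:ℝ) 1, Real.log (1 + x*y)/(1+y) :=
        intervalIntegral.integral_of_le zero_le_one
    _ = ∫ y in Set.Ioc (0:ℝ) 1, ∫ t in Set.Ioc (0:ℝ) x, y/((1+t*y)*(1+y)) :=
        setIntegral_congr_fun measurableSet_Ioc (fun y hy => hA y hy)
    _ = ∫ t in Set.Ioc (0:ℝ) x, ∫ y in Set.Ioc (0:ℝ) 1, y/((1+t*y)*(1+y)) := hswap
    _ = ∫ t in Set.Ioc (0:ℝ) x, (Real.log ((1+t)/2)/(1-t) + Real.log (1+t)/t) :=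
        integral_congr_ae hC
    _ = (∫ t in Set.Ioc (0:ℝ) x, Real.log ((1+t)/2)/(1-t))
          + ∫ t in Set.Ioc (0:ℝ) x, Real.log (1+t)/t := integral_add hint1 hint2
    _ = (∫ t in (0:ℝ)..x, Real.log ((1+t)/2)/(1-t)) + ∫ t in (0:ℝ)..x, Real.log (1+t)/t := by
        rw [intervalIntegral.integral_of_le hx0, intervalIntegral.integral_of_le hx0]
    _ = (Li2 ((1-x)/2) - Li2 (1/2)) + (- Li2 (-x)) := by rw [hf1, hf2]
    _ = Li2 ((1 - x) / 2) - Li2 (-x) + (Real.log 2) ^ 2 / 2 - Real.pi ^ 2 / 12 := by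
        rw [li2_half]
        ring
end

section
/- For |x| < 1, ∫₀¹ ln(1+xy)/(1+y) dy = ln 2 · ln(1-x) + ∑_{n=1}^∞ (xⁿ/n) H_n⁻, where H_n⁻ = ∑_{k=1}^n (-1)^(k-1)/k. -/
/-- The n-th skew-harmonic number H_n⁻ = ∑_{k=1}^n (-1)^(k-1)/k. -/
noncomputable def skewHarmonic (n : ℕ) : ℝ := ∑ k ∈ Finset.range n, (-1 : ℝ) ^ k / (k + 1)

open MeasureTheory intervalIntegral Real

lemma integ_pow (n : ℕ) :
    ∫ y in (0:ℝ)..1, y ^ n / (1 + y) = (-1) ^ n * (Real.log 2 - skewHarmonic n) := by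
  induction n with
  | zero =>
    have h := intervalIntegral.integral_comp_add_left (a := (0:ℝ)) (b := 1)
      (fun u => 1 / u) 1
    simp only [show (1:ℝ)+0=1 by norm_num, show (1:ℝ)+1=2 by norm_num] at h
    simp only [pow_zero, skewHarmonic, Finset.range_zero, Finset.sum_empty, sub_zero, one_mul]
    rw [h, integral_one_div (by norm_num : (0:ℝ) ∉ Set.uIcc (1:ℝ) 2)]
    norm_num
  | succ n ih =>
    have hcong : Set.EqOn (fun y : ℝ => y ^ (n+1) / (1 + y))
        (fun y : ℝ => y ^ n - y ^ n / (1 + y)) (Set.uIcc (0:ℝ) 1) := by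
      intro y hy
      rw [Set.uIcc_of_le (by norm_num : (0:ℝ) ≤ 1)] at hy
      have h0 : (0:ℝ) < 1 + y := by linarith [hy.1]
      field_simp
      ring
    rw [intervalIntegral.integral_congr hcong]
    have int1 : IntervalIntegrable (fun y : ℝ => y ^ n) volume 0 1 :=
      (continuous_pow n).intervalIntegrable _ _
    have int2 : IntervalIntegrable (fun y : ℝ => y ^ n / (1 + y)) volume 0 1 := by
      apply ContinuousOn.intervalIntegrable
      apply ContinuousOn.div (continuous_pow n).continuousOn
        (continuous_const.add continuous_id).continuousOn
      intro y hy
      rw [Set.uIcc_of_le (by norm_num : (0:ℝ) ≤ 1)] at hy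
      have := hy.1; show (1:ℝ) + y ≠ 0; exact ne_of_gt (by linarith)
    rw [intervalIntegral.integral_sub int1 int2, integral_pow, ih]
    have hs : skewHarmonic (n+1) = skewHarmonic n + (-1)^n / ((n:ℝ)+1) :=
      Finset.sum_range_succ _ n
    have hne : ((n:ℝ)+1) ≠ 0 := by positivity
    rw [hs, pow_succ]
    field_simp
    have ht : ((-1:ℝ))^n * (-1)^n = 1 := by
      rw [← pow_add]; exact Even.neg_one_pow ⟨n, rfl⟩
    rw [pow_succ]
    linear_combination -ht

lemma skew_abs_le (n : ℕ) : |skewHarmonic n| ≤ n := by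
  unfold skewHarmonic
  calc |∑ k ∈ Finset.range n, (-1:ℝ)^k / (k+1)|
      ≤ ∑ k ∈ Finset.range n, |(-1:ℝ)^k / (k+1)| := Finset.abs_sum_le_sum_abs _ _
    _ ≤ ∑ k ∈ Finset.range n, (1:ℝ) := by
        apply Finset.sum_le_sum
        intro k _
        rw [abs_div, abs_pow, abs_neg, abs_one, one_pow, abs_of_pos (by positivity : (0:ℝ) < (k:ℝ)+1)]
        rw [div_le_one (by positivity)]
        simp
    _ = n := by simp

theorem stmt_7 (x : ℝ) (hx : |x| < 1) :
    (∫ y in (0:ℝ)..1, Real.log (1 + x * y) / (1 + y))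
      = Real.log 2 * Real.log (1 - x)
        + ∑' n : ℕ, x ^ (n + 1) / ((n : ℝ) + 1) * skewHarmonic (n + 1) := by
  set F : ℕ → ℝ → ℝ :=
    fun n y => ((-1:ℝ)^n * x^(n+1) / ((n:ℝ)+1)) * (y^(n+1)/(1+y)) with hF
  -- integrability
  have hgcont : ∀ n : ℕ, ContinuousOn (fun y : ℝ => y^(n+1)/(1+y)) (Set.Icc (0:ℝ) 1) := by
    intro n
    apply ContinuousOn.div (continuous_pow (n+1)).continuousOn
      (continuous_const.add continuous_id).continuousOn
    intro y hy; have := hy.1; show (1:ℝ) + y ≠ 0; exact ne_of_gt (by linarith)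
  have hF_int : ∀ n : ℕ, IntegrableOn (F n) (Set.Ioc (0:ℝ) 1) volume := by
    intro n
    have h : IntegrableOn (F n) (Set.Icc (0:ℝ) 1) volume :=
      ((hgcont n).integrableOn_Icc).const_mul _
    exact h.mono_set Set.Ioc_subset_Icc_self
  -- pointwise bound
  have hbound : ∀ n : ℕ, ∀ y ∈ Set.Ioc (0:ℝ) 1, ‖F n y‖ ≤ |x|^(n+1) := by
    intro n y hy
    have hy0 : 0 < y := hy.1
    have hy1 : y ≤ 1 := hy.2
    have h1 : |y^(n+1)/(1+y)| ≤ 1 := by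
      rw [abs_div, abs_of_pos (by positivity : (0:ℝ) < y^(n+1)),
        abs_of_pos (by linarith : (0:ℝ) < 1+y)]
      rw [div_le_one (by linarith)]
      calc y^(n+1) ≤ 1 := pow_le_one₀ hy0.le hy1
        _ ≤ 1 + y := by linarith
    have h2 : |(-1:ℝ)^n * x^(n+1) / ((n:ℝ)+1)| ≤ |x|^(n+1) := by
      rw [abs_div, abs_mul, abs_pow, abs_neg, abs_one, one_pow, one_mul, abs_pow,
        abs_of_pos (by positivity : (0:ℝ) < (n:ℝ)+1)]
      apply div_le_of_le_mul₀ (by positivity) (by positivity)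
      nlinarith [pow_nonneg (abs_nonneg x) (n+1), (by exact_mod_cast Nat.zero_le n : (0:ℝ) ≤ n)]
    calc ‖F n y‖ = |(-1:ℝ)^n * x^(n+1) / ((n:ℝ)+1)| * |y^(n+1)/(1+y)| := by
          rw [hF]; exact abs_mul _ _
      _ ≤ |x|^(n+1) * 1 := mul_le_mul h2 h1 (abs_nonneg _) (by positivity)
      _ = |x|^(n+1) := mul_one _
  have hgeo : Summable (fun n : ℕ => |x|^(n+1)) := by
    have := (summable_geometric_of_lt_one (abs_nonneg x) hx).mul_left |x|
    simpa [pow_succ'] using this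
  -- summability of integrals of norms
  have hF_sum : Summable (fun n : ℕ => ∫ y in Set.Ioc (0:ℝ) 1, ‖F n y‖) := by
    apply Summable.of_nonneg_of_le
      (fun n => integral_nonneg fun y => norm_nonneg _) _ hgeo
    intro n
    calc (∫ y in Set.Ioc (0:ℝ) 1, ‖F n y‖)
        ≤ ∫ _ in Set.Ioc (0:ℝ) 1, |x|^(n+1) := by
          apply setIntegral_mono_on (hF_int n).norm _ measurableSet_Ioc (hbound n)
          exact (integrableOn_const_iff (C := |x|^(n+1))).mpr (Or.inr (by simp [Real.volume_Ioc]))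
      _ = |x|^(n+1) := by simp [Real.volume_Ioc]
  have hswap := MeasureTheory.integral_tsum_of_summable_integral_norm hF_int hF_sum
  -- pointwise sum of the series
  have hpt : ∀ y ∈ Set.Ioc (0:ℝ) 1, ∑' n, F n y = Real.log (1 + x*y) / (1 + y) := by
    intro y hy
    have hy0 : 0 < y := hy.1
    have hy1 : y ≤ 1 := hy.2
    have habs : |(-(x*y))| < 1 := by
      rw [abs_neg, abs_mul, abs_of_pos hy0]
      calc |x| * y ≤ |x| * 1 := by nlinarith [abs_nonneg x]
        _ < 1 := by simpa using hx
    have h := ((hasSum_pow_div_log_of_abs_lt_one habs).div_const (1+y)).neg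
    have heq : (fun n : ℕ => -((-(x*y))^(n+1)/((n:ℝ)+1)/(1+y))) = fun n => F n y := by
      funext n
      have hnp : (-(x*y))^(n+1) = (-1)^(n+1)*(x^(n+1)*y^(n+1)) := by
        rw [neg_pow, mul_pow]
      rw [hF, hnp, pow_succ]
      ring
    rw [heq] at h
    rw [h.tsum_eq]
    rw [show 1 - -(x*y) = 1 + x*y by ring]
    ring
  -- value of each integral
  have hval : ∀ n : ℕ, (∫ y in Set.Ioc (0:ℝ) 1, F n y)
      = -(Real.log 2 * (x^(n+1)/((n:ℝ)+1))) + x^(n+1)/((n:ℝ)+1) * skewHarmonic (n+1) := by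
    intro n
    have hc : (∫ y in Set.Ioc (0:ℝ) 1, F n y)
        = ((-1:ℝ)^n * x^(n+1) / ((n:ℝ)+1)) * ∫ y in Set.Ioc (0:ℝ) 1, y^(n+1)/(1+y) :=
      MeasureTheory.integral_const_mul _ _
    rw [hc]
    rw [← intervalIntegral.integral_of_le (by norm_num : (0:ℝ) ≤ 1), integ_pow (n+1)]
    have ht : ((-1:ℝ))^n * (-1)^n = 1 := by
      rw [← pow_add]; exact Even.neg_one_pow ⟨n, rfl⟩
    rw [pow_succ]
    linear_combination (x^(n+1)/((n:ℝ)+1) * skewHarmonic (n+1) - Real.log 2 * (x^(n+1)/((n:ℝ)+1))) * ht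
  -- the two convergent series
  have h1 : HasSum (fun n : ℕ => -(Real.log 2 * (x^(n+1)/((n:ℝ)+1))))
      (Real.log 2 * Real.log (1-x)) := by
    have h := ((hasSum_pow_div_log_of_abs_lt_one hx).mul_left (Real.log 2)).neg
    simpa [mul_neg, neg_neg] using h
  have h2 : Summable (fun n : ℕ => x^(n+1)/((n:ℝ)+1) * skewHarmonic (n+1)) := by
    apply Summable.of_norm
    apply Summable.of_nonneg_of_le (fun n => norm_nonneg _) _ hgeo
    intro n
    rw [norm_mul, norm_div]
    calc ‖x^(n+1)‖ / ‖((n:ℝ)+1)‖ * ‖skewHarmonic (n+1)‖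
        ≤ |x|^(n+1) / ((n:ℝ)+1) * ((n:ℝ)+1) := by
          apply mul_le_mul
          · rw [Real.norm_eq_abs, Real.norm_eq_abs, abs_pow,
              abs_of_pos (by positivity : (0:ℝ) < (n:ℝ)+1)]
          · simpa [Real.norm_eq_abs] using skew_abs_le (n+1)
          · exact norm_nonneg _
          · positivity
      _ = |x|^(n+1) := by field_simp
  have hsum2 := (h1.add h2.hasSum).tsum_eq
  -- assemble
  rw [intervalIntegral.integral_of_le (by norm_num : (0:ℝ) ≤ 1)]
  rw [← MeasureTheory.setIntegral_congr_fun measurableSet_Ioc hpt]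
  rw [← hswap]
  rw [show (fun n => ∫ y in Set.Ioc (0:ℝ) 1, F n y)
      = fun n : ℕ => -(Real.log 2 * (x^(n+1)/((n:ℝ)+1))) + x^(n+1)/((n:ℝ)+1) * skewHarmonic (n+1)
    from funext hval]
  rw [hsum2]
end

section
/- ∫₀^{1/2} ln²(1-t)/t dt = -(ln 2)³ - 2 ln 2 · Li₂(1/2) - 2 Li₃(1/2) + 2ζ(3). -/
noncomputable def Li3 (z : ℝ) : ℝ := ∑' n : ℕ, z ^ (n + 1) / ((n : ℝ) + 1) ^ 3

open MeasureTheory Real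

lemma S1 : Summable (fun n : ℕ => 1 / ((n : ℝ) + 1) ^ 3) := by
  have := Real.summable_one_div_nat_pow.mpr (by norm_num : 2 ≤ 3)
  have h2 := (summable_nat_add_iff 1).mpr this
  simpa [Nat.cast_add] using h2

lemma S2 (k : ℕ) : Summable (fun n : ℕ => (1/2 : ℝ) ^ (n + 1) / ((n : ℝ) + 1) ^ k) := by
  apply Summable.of_nonneg_of_le (fun n => by positivity) (fun n => ?_) summable_geometric_two
  calc (1/2 : ℝ) ^ (n + 1) / ((n : ℝ) + 1) ^ k ≤ (1/2 : ℝ) ^ (n + 1) := by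
        apply div_le_self (by positivity)
        apply one_le_pow₀
        linarith [Nat.cast_nonneg (α := ℝ) n]
    _ ≤ (1/2 : ℝ) ^ n := pow_le_pow_of_le_one (by norm_num) (by norm_num) (by omega)

lemma hasDeriv_F (n : ℕ) {u : ℝ} (hu : 0 < u) :
    HasDerivAt (fun u : ℝ => u ^ (n+1) *
        ((Real.log u) ^ 2 / ((n : ℝ)+1) - 2 * Real.log u / ((n : ℝ)+1) ^ 2 + 2 / ((n : ℝ)+1) ^ 3))
      (u ^ n * (Real.log u) ^ 2) u := by
  have hlog := Real.hasDerivAt_log hu.ne'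
  have h1 : HasDerivAt (fun u : ℝ => (Real.log u) ^ 2 / ((n : ℝ)+1)
      - 2 * Real.log u / ((n : ℝ)+1) ^ 2 + 2 / ((n : ℝ)+1) ^ 3)
      (2 * Real.log u * u⁻¹ / ((n : ℝ)+1) - 2 * u⁻¹ / ((n : ℝ)+1) ^ 2) u := by
    have h := (((hlog.pow 2).div_const ((n : ℝ)+1)).sub
      ((hlog.const_mul 2).div_const (((n : ℝ)+1) ^ 2))).add_const (2 / ((n : ℝ)+1) ^ 3)
    refine h.congr_deriv ?_
    push_cast
    ring
  have h2 := (hasDerivAt_pow (n+1) u).mul h1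
  refine h2.congr_deriv ?_
  have hc : ((n : ℝ) + 1) ≠ 0 := by positivity
  have : (n + 1 - 1 : ℕ) = n := rfl
  rw [this]
  push_cast
  field_simp
  ring

lemma integralA (n : ℕ) :
    ∫ u in (1/2 : ℝ)..1, u ^ n * (Real.log u) ^ 2
      = 2 / ((n : ℝ)+1) ^ 3 - (1/2 : ℝ) ^ (n+1) *
        ((Real.log 2) ^ 2 / ((n : ℝ)+1) + 2 * Real.log 2 / ((n : ℝ)+1) ^ 2 + 2 / ((n : ℝ)+1) ^ 3) := by
  rw [intervalIntegral.integral_eq_sub_of_hasDerivAt (f := fun u : ℝ => u ^ (n+1) *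
        ((Real.log u) ^ 2 / ((n : ℝ)+1) - 2 * Real.log u / ((n : ℝ)+1) ^ 2 + 2 / ((n : ℝ)+1) ^ 3))
      (fun u hu => hasDeriv_F n (by
        rw [Set.uIcc_of_le (by norm_num : (1/2:ℝ) ≤ 1)] at hu
        linarith [hu.1])) ?_]
  · rw [show Real.log (1/2) = -Real.log 2 by rw [one_div, Real.log_inv]]
    simp [Real.log_one]
    ring
  · apply ContinuousOn.intervalIntegrable
    apply ContinuousOn.mul (continuousOn_pow n)
    apply ContinuousOn.pow
    apply Real.continuousOn_log.mono
    rw [Set.uIcc_of_le (by norm_num : (1/2:ℝ) ≤ 1)]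
    intro x hx
    simp only [Set.mem_compl_iff, Set.mem_singleton_iff]
    intro h; rw [h] at hx; linarith [hx.1]

lemma pos_lower (n : ℕ) : (0:ℝ) ≤ (1/2 : ℝ) ^ (n+1) *
    ((Real.log 2) ^ 2 / ((n : ℝ)+1) + 2 * Real.log 2 / ((n : ℝ)+1) ^ 2 + 2 / ((n : ℝ)+1) ^ 3) := by
  have hl : (0:ℝ) ≤ Real.log 2 := Real.log_nonneg (by norm_num)
  positivity

theorem stmt_9 :
    (∫ t in (0:ℝ)..(1/2), (Real.log (1 - t)) ^ 2 / t)
      = -(Real.log 2) ^ 3 - 2 * Real.log 2 * Li2 (1/2) - 2 * Li3 (1/2)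
        + 2 * (∑' n : ℕ, 1 / ((n : ℝ) + 1) ^ 3) := by
  -- Step 1: substitution u = 1 - t
  have hsub : (∫ t in (0:ℝ)..(1/2), (Real.log (1 - t)) ^ 2 / t)
      = ∫ u in (1/2 : ℝ)..1, (Real.log u) ^ 2 / (1 - u) := by
    have h := intervalIntegral.integral_comp_sub_left (a := (0:ℝ)) (b := 1/2)
      (fun u => (Real.log u) ^ 2 / (1 - u)) 1
    simp only [sub_sub_cancel, sub_zero] at h
    norm_num at h
    exact h
  rw [hsub]
  -- Step 2: interval integral to set integral
  rw [intervalIntegral.integral_of_le (by norm_num : (1/2:ℝ) ≤ 1)]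
  -- Step 3: pointwise series expansion on Ioc
  have hpt : Set.EqOn (fun u : ℝ => (Real.log u) ^ 2 / (1 - u))
      (fun u : ℝ => ∑' n : ℕ, u ^ n * (Real.log u) ^ 2) (Set.Ioc (1/2 : ℝ) 1) := by
    intro u hu
    rcases eq_or_lt_of_le hu.2 with h1 | h1
    · simp [h1, Real.log_one]
    · have h0 : (0:ℝ) ≤ u := by linarith [hu.1]
      simp only
      rw [tsum_mul_right, tsum_geometric_of_lt_one h0 h1, inv_mul_eq_div]
  rw [setIntegral_congr_fun measurableSet_Ioc hpt]
  -- Step 4: swap integral and sum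
  have hmeas : ∀ n : ℕ, AEStronglyMeasurable (fun u : ℝ => u ^ n * (Real.log u) ^ 2)
      (volume.restrict (Set.Ioc (1/2 : ℝ) 1)) := by
    intro n
    exact ((measurable_id.pow_const n).mul (Real.measurable_log.pow_const 2)).aestronglyMeasurable
  have hint : ∀ n : ℕ, IntegrableOn (fun u : ℝ => u ^ n * (Real.log u) ^ 2)
      (Set.Ioc (1/2 : ℝ) 1) volume := by
    intro n
    have := (integralA n) ▸ intervalIntegral.integral_of_le (by norm_num : (1/2:ℝ) ≤ 1)
    have hii : IntervalIntegrable (fun u : ℝ => u ^ n * (Real.log u) ^ 2) volume (1/2) 1 := by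
      apply ContinuousOn.intervalIntegrable
      apply ContinuousOn.mul (continuousOn_pow n)
      apply ContinuousOn.pow
      apply Real.continuousOn_log.mono
      rw [Set.uIcc_of_le (by norm_num : (1/2:ℝ) ≤ 1)]
      intro x hx
      simp only [Set.mem_compl_iff, Set.mem_singleton_iff]
      intro h; rw [h] at hx; linarith [hx.1]
    exact (intervalIntegrable_iff_integrableOn_Ioc_of_le (by norm_num)).mp hii
  have hnn : ∀ n : ℕ, ∀ u ∈ Set.Ioc (1/2 : ℝ) 1, (0:ℝ) ≤ u ^ n * (Real.log u) ^ 2 := by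
    intro n u hu
    have : (0:ℝ) ≤ u := by linarith [hu.1]
    positivity
  have hval : ∀ n : ℕ, ∫ u in Set.Ioc (1/2 : ℝ) 1, u ^ n * (Real.log u) ^ 2
      = 2 / ((n : ℝ)+1) ^ 3 - (1/2 : ℝ) ^ (n+1) *
        ((Real.log 2) ^ 2 / ((n : ℝ)+1) + 2 * Real.log 2 / ((n : ℝ)+1) ^ 2 + 2 / ((n : ℝ)+1) ^ 3) := by
    intro n
    rw [← intervalIntegral.integral_of_le (by norm_num : (1/2:ℝ) ≤ 1), integralA n]
  have hswap : ∫ u in Set.Ioc (1/2 : ℝ) 1, (∑' n : ℕ, u ^ n * (Real.log u) ^ 2)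
      = ∑' n : ℕ, ∫ u in Set.Ioc (1/2 : ℝ) 1, u ^ n * (Real.log u) ^ 2 := by
    apply integral_tsum hmeas
    have hle : ∀ n : ℕ, (∫⁻ u in Set.Ioc (1/2 : ℝ) 1, ‖u ^ n * (Real.log u) ^ 2‖₊)
        ≤ ENNReal.ofReal (2 / ((n : ℝ)+1) ^ 3) := by
      intro n
      have hae : 0 ≤ᵐ[volume.restrict (Set.Ioc (1/2 : ℝ) 1)]
          (fun u : ℝ => u ^ n * (Real.log u) ^ 2) :=
        (ae_restrict_iff' measurableSet_Ioc).mpr (Filter.Eventually.of_forall (hnn n))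
      have h1 : (∫⁻ u in Set.Ioc (1/2 : ℝ) 1, ‖u ^ n * (Real.log u) ^ 2‖₊)
          = ENNReal.ofReal (∫ u in Set.Ioc (1/2 : ℝ) 1, u ^ n * (Real.log u) ^ 2) := by
        rw [ofReal_integral_eq_lintegral_ofReal (hint n) hae]
        apply lintegral_congr_ae
        filter_upwards [hae] with u hu
        rw [← Real.enorm_eq_ofReal hu, enorm_eq_nnnorm]
      rw [h1, hval n]
      apply ENNReal.ofReal_le_ofReal
      linarith [pos_lower n]
    have hcalc : (∑' n : ℕ, ∫⁻ u in Set.Ioc (1/2 : ℝ) 1, ‖u ^ n * (Real.log u) ^ 2‖₊)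
        ≤ ENNReal.ofReal (∑' n : ℕ, 2 / ((n : ℝ)+1) ^ 3) := by
      rw [ENNReal.ofReal_tsum_of_nonneg (fun n => by positivity)
        (by simpa [div_eq_mul_inv] using S1.mul_left 2)]
      exact ENNReal.tsum_le_tsum hle
    exact (lt_of_le_of_lt hcalc ENNReal.ofReal_lt_top).ne
  rw [hswap]
  have heq : ∀ n : ℕ, (∫ u in Set.Ioc (1/2 : ℝ) 1, u ^ n * (Real.log u) ^ 2)
      = 2 * (1 / ((n : ℝ)+1) ^ 3)
        - ((Real.log 2) ^ 2 * ((1/2 : ℝ) ^ (n+1) / ((n : ℝ)+1) ^ 1)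
          + 2 * Real.log 2 * ((1/2 : ℝ) ^ (n+1) / ((n : ℝ)+1) ^ 2)
          + 2 * ((1/2 : ℝ) ^ (n+1) / ((n : ℝ)+1) ^ 3)) := by
    intro n
    rw [hval n]
    have hc : ((n : ℝ) + 1) ≠ 0 := by positivity
    field_simp
  rw [tsum_congr heq]
  -- splitting the sums
  have hS1 := S1.mul_left 2
  have hA := (S2 1).mul_left ((Real.log 2) ^ 2)
  have hB := (S2 2).mul_left (2 * Real.log 2)
  have hC := (S2 3).mul_left 2
  rw [Summable.tsum_sub hS1 ((hA.add hB).add hC), Summable.tsum_add (hA.add hB) hC,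
    Summable.tsum_add hA hB, tsum_mul_left, tsum_mul_left, tsum_mul_left, tsum_mul_left]
  have hlog : (∑' n : ℕ, (1/2 : ℝ) ^ (n+1) / ((n : ℝ)+1) ^ 1) = Real.log 2 := by
    have h := (hasSum_pow_div_log_of_abs_lt_one (x := (1/2 : ℝ)) (by rw [abs_of_pos] <;> norm_num)).tsum_eq
    rw [show (1:ℝ) - 1/2 = 1/2 by norm_num, one_div, Real.log_inv, neg_neg] at h
    rw [← h]
    apply tsum_congr
    intro n
    ring
  rw [hlog]
  rw [show (∑' n : ℕ, (1/2 : ℝ) ^ (n+1) / ((n : ℝ)+1) ^ 2) = Li2 (1/2) from rfl,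
    show (∑' n : ℕ, (1/2 : ℝ) ^ (n+1) / ((n : ℝ)+1) ^ 3) = Li3 (1/2) from rfl]
  ring
end

section
/- For |t| < 1, ∑_{n=1}^∞ (H_n^{(2)}/n) tⁿ + 2 ∑_{n=1}^∞ (H_n/n²) tⁿ = 3 Li₃(t) - Li₂(t) · ln(1-t). -/
noncomputable def harmonic' (n : ℕ) : ℝ := ∑ k ∈ Finset.range n, 1 / ((k : ℝ) + 1)
noncomputable def H2 (n : ℕ) : ℝ := ∑ k ∈ Finset.range n, 1 / ((k : ℝ) + 1) ^ 2

lemma coefKey (m : ℕ) :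
    ∑ k ∈ Finset.range (m+1), 1 / (((k:ℝ)+1)^2 * ((m:ℝ) - (k:ℝ) + 1))
      = H2 (m+1) / ((m:ℝ)+2) + 2 * harmonic' (m+1) / ((m:ℝ)+2)^2 := by
  have hsplit : ∀ k ∈ Finset.range (m+1),
      1 / (((k:ℝ)+1)^2 * ((m:ℝ) - (k:ℝ) + 1))
        = 1/((m:ℝ)+2) * (1/((k:ℝ)+1)^2) + 1/((m:ℝ)+2)^2 * (1/((k:ℝ)+1))
          + 1/((m:ℝ)+2)^2 * (1/((m:ℝ) - (k:ℝ) + 1)) := by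
    intro k hk
    have hk' : (k:ℝ) ≤ m := by exact_mod_cast Nat.lt_succ_iff.mp (Finset.mem_range.mp hk)
    have h1 : (0:ℝ) < (k:ℝ)+1 := by positivity
    have h2 : (0:ℝ) < (m:ℝ) - (k:ℝ) + 1 := by linarith
    have h3 : (0:ℝ) < (m:ℝ)+2 := by positivity
    field_simp
    ring
  rw [Finset.sum_congr rfl hsplit, Finset.sum_add_distrib, Finset.sum_add_distrib,
    ← Finset.mul_sum, ← Finset.mul_sum, ← Finset.mul_sum]
  have hrefl : ∑ k ∈ Finset.range (m+1), 1/((m:ℝ) - (k:ℝ) + 1) = harmonic' (m+1) := by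
    rw [harmonic', ← Finset.sum_range_reflect (fun j => 1/((j:ℝ)+1)) (m+1)]
    apply Finset.sum_congr rfl
    intro k hk
    have hk' : k ≤ m := Nat.lt_succ_iff.mp (Finset.mem_range.mp hk)
    have hc : ((m + 1 - 1 - k : ℕ) : ℝ) = (m:ℝ) - (k:ℝ) := by
      have : m + 1 - 1 - k = m - k := by omega
      rw [this, Nat.cast_sub hk']
    rw [hc]
  rw [hrefl, ← H2, ← harmonic']
  ring

lemma dsucc (m : ℕ) :
    H2 (m+2) / ((m:ℝ)+2) + 2 * harmonic' (m+2) / ((m:ℝ)+2)^2 - 3 / ((m:ℝ)+2)^3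
      = H2 (m+1) / ((m:ℝ)+2) + 2 * harmonic' (m+1) / ((m:ℝ)+2)^2 := by
  have h3 : (0:ℝ) < (m:ℝ)+2 := by positivity
  have e1 : H2 (m+2) = H2 (m+1) + 1/((m:ℝ)+2)^2 := by
    rw [H2, Finset.sum_range_succ, ← H2]; push_cast; ring_nf
  have e2 : harmonic' (m+2) = harmonic' (m+1) + 1/((m:ℝ)+2) := by
    rw [harmonic', Finset.sum_range_succ, ← harmonic']; push_cast; ring_nf
  rw [e1, e2]
  field_simp
  ring

lemma harmonic'_le (n : ℕ) : harmonic' n ≤ n := by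
  calc harmonic' n ≤ ∑ k ∈ Finset.range n, 1 := by
        apply Finset.sum_le_sum
        intro k _
        rw [div_le_one (by positivity)]
        have : (0:ℝ) ≤ (k:ℝ) := Nat.cast_nonneg k
        linarith
    _ = n := by simp

lemma H2_le (n : ℕ) : H2 n ≤ n := by
  calc H2 n ≤ ∑ k ∈ Finset.range n, 1 := by
        apply Finset.sum_le_sum
        intro k _
        rw [div_le_one (by positivity)]
        nlinarith [Nat.cast_nonneg (α := ℝ) k]
    _ = n := by simp

lemma harmonic'_nonneg (n : ℕ) : 0 ≤ harmonic' n := by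
  apply Finset.sum_nonneg; intro k _; positivity

lemma H2_nonneg (n : ℕ) : 0 ≤ H2 n := by
  apply Finset.sum_nonneg; intro k _; positivity

theorem stmt_16 (t : ℝ) (ht : |t| < 1) :
    (∑' n : ℕ, H2 (n + 1) / ((n : ℝ) + 1) * t ^ (n + 1))
      + 2 * ∑' n : ℕ, harmonic' (n + 1) / ((n : ℝ) + 1) ^ 2 * t ^ (n + 1)
      = 3 * Li3 t - Li2 t * Real.log (1 - t) := by
  have hr : Summable (fun n : ℕ => |t|^(n+1)) := by
    simpa [pow_succ, mul_comm] using
      (summable_geometric_of_lt_one (abs_nonneg t) ht).mul_left |t|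
  have hbase : ∀ n : ℕ, (0:ℝ) < (n:ℝ)+1 := fun n => by positivity
  -- the five series
  set A : ℕ → ℝ := fun n => H2 (n+1) / ((n:ℝ)+1) * t^(n+1) with hAdef
  set B : ℕ → ℝ := fun n => harmonic' (n+1) / ((n:ℝ)+1)^2 * t^(n+1) with hBdef
  set C : ℕ → ℝ := fun n => t^(n+1) / ((n:ℝ)+1)^3 with hCdef
  set f : ℕ → ℝ := fun n => t^(n+1) / ((n:ℝ)+1)^2 with hfdef
  set g : ℕ → ℝ := fun n => t^(n+1) / ((n:ℝ)+1) with hgdef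
  have hAbd : ∀ n, ‖A n‖ ≤ |t|^(n+1) := by
    intro n
    have h1 : H2 (n+1) ≤ (n:ℝ)+1 := by exact_mod_cast H2_le (n+1)
    have h2 : 0 ≤ H2 (n+1) := H2_nonneg _
    have : |A n| = H2 (n+1) / ((n:ℝ)+1) * |t|^(n+1) := by
      rw [hAdef, abs_mul, abs_pow, abs_of_nonneg (by positivity)]
    rw [Real.norm_eq_abs, this]
    have hle : H2 (n+1) / ((n:ℝ)+1) ≤ 1 := by
      rw [div_le_one (hbase n)]; exact h1
    nlinarith [pow_nonneg (abs_nonneg t) (n+1)]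
  have hBbd : ∀ n, ‖B n‖ ≤ |t|^(n+1) := by
    intro n
    have h1 : harmonic' (n+1) ≤ (n:ℝ)+1 := by exact_mod_cast harmonic'_le (n+1)
    have h2 : 0 ≤ harmonic' (n+1) := harmonic'_nonneg _
    have : |B n| = harmonic' (n+1) / ((n:ℝ)+1)^2 * |t|^(n+1) := by
      rw [hBdef, abs_mul, abs_pow, abs_of_nonneg (by positivity)]
    rw [Real.norm_eq_abs, this]
    have hle : harmonic' (n+1) / ((n:ℝ)+1)^2 ≤ 1 := by
      rw [div_le_one (by positivity)]
      nlinarith [hbase n]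
    nlinarith [pow_nonneg (abs_nonneg t) (n+1)]
  have hCbd : ∀ n, ‖C n‖ ≤ |t|^(n+1) := by
    intro n
    rw [Real.norm_eq_abs, hCdef, abs_div, abs_pow]
    have h0 : (1:ℝ) ≤ (n:ℝ)+1 := by linarith [Nat.cast_nonneg (α := ℝ) n]
    have h1 : (1:ℝ) ≤ |((n:ℝ)+1)^3| := by
      rw [abs_of_nonneg (by positivity)]
      calc (1:ℝ) = 1^3 := by norm_num
        _ ≤ ((n:ℝ)+1)^3 := pow_le_pow_left₀ (by norm_num) h0 3
    calc |t|^(n+1) / |((n:ℝ)+1)^3| ≤ |t|^(n+1) / 1 := by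
          apply div_le_div_of_nonneg_left (pow_nonneg (abs_nonneg t) _) one_pos h1
      _ = |t|^(n+1) := by ring
  have hfbd : ∀ n, ‖f n‖ ≤ |t|^(n+1) := by
    intro n
    rw [Real.norm_eq_abs, hfdef, abs_div, abs_pow]
    have h0 : (1:ℝ) ≤ (n:ℝ)+1 := by linarith [Nat.cast_nonneg (α := ℝ) n]
    have h1 : (1:ℝ) ≤ |((n:ℝ)+1)^2| := by
      rw [abs_of_nonneg (by positivity)]
      calc (1:ℝ) = 1^2 := by norm_num
        _ ≤ ((n:ℝ)+1)^2 := pow_le_pow_left₀ (by norm_num) h0 2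
    calc |t|^(n+1) / |((n:ℝ)+1)^2| ≤ |t|^(n+1) / 1 := by
          apply div_le_div_of_nonneg_left (pow_nonneg (abs_nonneg t) _) one_pos h1
      _ = |t|^(n+1) := by ring
  have hgbd : ∀ n, ‖g n‖ ≤ |t|^(n+1) := by
    intro n
    rw [Real.norm_eq_abs, hgdef, abs_div, abs_pow]
    have h1 : (1:ℝ) ≤ |(n:ℝ)+1| := by
      rw [abs_of_nonneg (by positivity)]
      linarith [Nat.cast_nonneg (α := ℝ) n]
    calc |t|^(n+1) / |(n:ℝ)+1| ≤ |t|^(n+1) / 1 := by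
          apply div_le_div_of_nonneg_left (pow_nonneg (abs_nonneg t) _) one_pos h1
      _ = |t|^(n+1) := by ring
  have hA : Summable A := Summable.of_norm_bounded hr hAbd
  have hB : Summable B := Summable.of_norm_bounded hr hBbd
  have hC : Summable C := Summable.of_norm_bounded hr hCbd
  have hfn : Summable (fun n => ‖f n‖) := Summable.of_nonneg_of_le (fun n => norm_nonneg _) hfbd hr
  have hgn : Summable (fun n => ‖g n‖) := Summable.of_nonneg_of_le (fun n => norm_nonneg _) hgbd hr
  -- log series
  have hlog : Real.log (1-t) = -∑' n : ℕ, g n := by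
    have := (Real.hasSum_pow_div_log_of_abs_lt_one ht).tsum_eq
    rw [hgdef]
    simp only [this]
    ring
  -- Cauchy product
  have hprod : Li2 t * (∑' n, g n)
      = ∑' n : ℕ, ∑ kl ∈ Finset.HasAntidiagonal.antidiagonal n, f kl.1 * g kl.2 := by
    rw [Li2]
    exact tsum_mul_tsum_eq_tsum_sum_antidiagonal_of_summable_norm hfn hgn
  -- evaluate the antidiagonal sums
  have hant : ∀ n : ℕ, ∑ kl ∈ Finset.HasAntidiagonal.antidiagonal n, f kl.1 * g kl.2
      = (H2 (n+1) / ((n:ℝ)+2) + 2 * harmonic' (n+1) / ((n:ℝ)+2)^2) * t^(n+2) := by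
    intro n
    rw [Finset.Nat.sum_antidiagonal_eq_sum_range_succ_mk]
    have hterm : ∀ k ∈ Finset.range (n+1),
        f (k, n - k).1 * g (k, n - k).2
          = t^(n+2) * (1 / (((k:ℝ)+1)^2 * ((n:ℝ) - (k:ℝ) + 1))) := by
      intro k hk
      have hk' : k ≤ n := Nat.lt_succ_iff.mp (Finset.mem_range.mp hk)
      have hc : ((n - k : ℕ) : ℝ) = (n:ℝ) - (k:ℝ) := Nat.cast_sub hk'
      have hp : t^(k+1) * t^(n-k+1) = t^(n+2) := by
        rw [← pow_add]
        congr 1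
        omega
      simp only [hfdef, hgdef, hc]
      rw [div_mul_div_comm, hp]
      ring
    rw [Finset.sum_congr rfl hterm, ← Finset.mul_sum, coefKey n]
    ring
  -- combine left side
  set D : ℕ → ℝ := fun n =>
    H2 (n+1) / ((n:ℝ)+1) + 2 * harmonic' (n+1) / ((n:ℝ)+1)^2 - 3 / ((n:ℝ)+1)^3 with hDdef
  have e1 : ∀ n, D n * t^(n+1) = A n + 2 * B n - 3 * C n := by
    intro n; simp only [hDdef, hAdef, hBdef, hCdef]; ring
  have hsumD : Summable (fun n => D n * t^(n+1)) := by
    have : (fun n => D n * t^(n+1)) = fun n => A n + 2 * B n - 3 * C n := funext e1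
    rw [this]
    exact ((hA.add ((hB.mul_left 2))).sub (hC.mul_left 3))
  have hDsum : ∑' n, D n * t^(n+1)
      = (∑' n, A n) + 2 * (∑' n, B n) - 3 * Li3 t := by
    calc ∑' n, D n * t^(n+1) = ∑' n, (A n + 2 * B n - 3 * C n) := by
          exact tsum_congr e1
      _ = (∑' n, (A n + 2 * B n)) - ∑' n, 3 * C n :=
          Summable.tsum_sub (hA.add (hB.mul_left 2)) (hC.mul_left 3)
      _ = (∑' n, A n) + (∑' n, 2 * B n) - ∑' n, 3 * C n := by
          rw [Summable.tsum_add hA (hB.mul_left 2)]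
      _ = (∑' n, A n) + 2 * (∑' n, B n) - 3 * Li3 t := by
          rw [tsum_mul_left, tsum_mul_left, Li3]
  -- shift index
  have hD0 : D 0 * t^1 = 0 := by
    simp only [hDdef]
    norm_num [H2, harmonic']
  have hshift : ∑' n, D n * t^(n+1)
      = ∑' n : ℕ, (H2 (n+1) / ((n:ℝ)+2) + 2 * harmonic' (n+1) / ((n:ℝ)+2)^2) * t^(n+2) := by
    rw [Summable.tsum_eq_zero_add hsumD, hD0, zero_add]
    apply tsum_congr
    intro n
    have : D (n+1) = H2 (n+1) / ((n:ℝ)+2) + 2 * harmonic' (n+1) / ((n:ℝ)+2)^2 := by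
      have := dsucc n
      simp only [hDdef]
      convert this using 3 <;> push_cast <;> ring
    rw [this]
  -- conclude
  have key : (∑' n, A n) + 2 * (∑' n, B n) - 3 * Li3 t = - (Li2 t * Real.log (1-t)) := by
    rw [← hDsum, hshift, hlog]
    rw [← tsum_congr hant, ← hprod]
    ring
  have : (∑' n, A n) + 2 * (∑' n, B n) = 3 * Li3 t - Li2 t * Real.log (1-t) := by
    linarith
  simpa [hAdef, hBdef] using this
end

section
/- ∑_{n=1}^∞ ((-1)^(n-1)/n) H_n⁻ = (ln 2)²/2 + π²/12, where H_n⁻ = ∑_{k=1}^n (-1)^(k-1)/k. -/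
open Filter
open Topology

lemma skewHarmonic_two_mul (n : ℕ) :
    skewHarmonic (2 * n) = (harmonic (2 * n) : ℝ) - (harmonic n : ℝ) := by
  induction n with
  | zero => simp [skewHarmonic]
  | succ n ih =>
    have h2 : 2 * (n + 1) = (2 * n + 1) + 1 := by ring
    rw [h2]
    unfold skewHarmonic
    rw [Finset.sum_range_succ, Finset.sum_range_succ]
    have : ∑ k ∈ Finset.range (2 * n), (-1 : ℝ) ^ k / (k + 1) = skewHarmonic (2 * n) := rfl
    rw [this, ih]
    rw [show (2 * n + 1 : ℕ) + 1 = 2 * n + 2 from rfl]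
    rw [harmonic_succ (2 * n + 1), harmonic_succ (2 * n), harmonic_succ n]
    push_cast
    have h1 : ((2 * n : ℕ) : ℝ) = 2 * n := by push_cast; ring
    rw [pow_succ, Even.neg_one_pow ⟨n, by ring⟩]
    have hn1 : (n : ℝ) + 1 ≠ 0 := by positivity
    have hn2 : (2 * (n : ℝ) + 1) ≠ 0 := by positivity
    have hn3 : (2 * (n : ℝ) + 2) ≠ 0 := by positivity
    field_simp
    ring

lemma tendsto_skewHarmonic : Tendsto skewHarmonic atTop (𝓝 (Real.log 2)) := by
  have hanti : Antitone (fun n : ℕ => (1 : ℝ) / (n + 1)) := by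
    intro a b hab
    apply div_le_div_of_nonneg_left one_pos.le (by positivity)
    have : (a : ℝ) ≤ b := Nat.cast_le.mpr hab
    linarith
  have h0 : Tendsto (fun n : ℕ => (1 : ℝ) / (n + 1)) atTop (𝓝 0) :=
    tendsto_one_div_add_atTop_nhds_zero_nat
  obtain ⟨l, hl⟩ := hanti.tendsto_alternating_series_of_tendsto_zero h0
  have hl' : Tendsto skewHarmonic atTop (𝓝 l) := by
    convert hl using 2 with n
    unfold skewHarmonic
    exact Finset.sum_congr rfl fun k _ => by rw [mul_one_div]
  -- identify l = log 2 via the subsequence 2n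
  have hsub : Tendsto (fun n : ℕ => skewHarmonic (2 * n)) atTop (𝓝 l) :=
    hl'.comp (tendsto_id.const_mul_atTop' two_pos)
  have hkey : Tendsto (fun n : ℕ => skewHarmonic (2 * n)) atTop (𝓝 (Real.log 2)) := by
    have hγ := Real.tendsto_harmonic_sub_log
    have hγ2 : Tendsto (fun n : ℕ => (harmonic (2 * n) : ℝ) - Real.log (2 * n)) atTop
        (𝓝 Real.eulerMascheroniConstant) := by
      have := hγ.comp (tendsto_id.const_mul_atTop' (l := atTop) two_pos)
      convert this using 2 with n
      simp [Function.comp]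
    have hdiff : Tendsto (fun n : ℕ => ((harmonic (2 * n) : ℝ) - Real.log (2 * n)) -
        ((harmonic n : ℝ) - Real.log n) + Real.log 2) atTop (𝓝 (Real.log 2)) := by
      have := (hγ2.sub hγ).add_const (Real.log 2)
      simpa using this
    apply hdiff.congr'
    filter_upwards [eventually_ge_atTop 1] with n hn
    have hn' : (0 : ℝ) < n := by exact_mod_cast hn
    rw [skewHarmonic_two_mul]
    have : Real.log (2 * n) = Real.log 2 + Real.log n := by
      rw [← Real.log_mul two_ne_zero hn'.ne']
    rw [this]
    try ring
  rwa [tendsto_nhds_unique hsub hkey] at hl'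

lemma tendsto_basel :
    Tendsto (fun N : ℕ => ∑ n ∈ Finset.range N, (1 : ℝ) / (n + 1) ^ 2) atTop
      (𝓝 (Real.pi ^ 2 / 6)) := by
  have h := hasSum_zeta_two
  have h' : HasSum (fun n : ℕ => (1 : ℝ) / ((n : ℝ) + 1) ^ 2) (Real.pi ^ 2 / 6) := by
    have h2 : HasSum (fun n : ℕ => (1 : ℝ) / ((n + 1 : ℕ) : ℝ) ^ 2)
        (Real.pi ^ 2 / 6 - ∑ i ∈ Finset.range 1, (1 : ℝ) / (i : ℝ) ^ 2) :=
      (hasSum_nat_add_iff' (f := fun n : ℕ => (1 : ℝ) / (n : ℝ) ^ 2) 1).mpr h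
    simp only [Finset.range_one, Finset.sum_singleton, Nat.cast_zero] at h2
    norm_num at h2
    convert h2 using 2 with n
    norm_num
  exact h'.tendsto_sum_nat

lemma sum_identity (N : ℕ) :
    ∑ n ∈ Finset.range N, (-1 : ℝ) ^ n / (n + 1) * skewHarmonic (n + 1) =
      (skewHarmonic N ^ 2 + ∑ n ∈ Finset.range N, (1 : ℝ) / (n + 1) ^ 2) / 2 := by
  induction N with
  | zero => simp [skewHarmonic]
  | succ N ih =>
    rw [Finset.sum_range_succ, Finset.sum_range_succ, ih]
    have hstep : skewHarmonic (N + 1) = skewHarmonic N + (-1 : ℝ) ^ N / (N + 1) := by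
      unfold skewHarmonic
      rw [Finset.sum_range_succ]
    rw [hstep]
    have hsq : ((-1 : ℝ) ^ N / (N + 1)) ^ 2 = 1 / ((N : ℝ) + 1) ^ 2 := by
      rw [div_pow, ← pow_mul, mul_comm N 2, pow_mul]
      norm_num
    rw [← hsq]
    ring

theorem stmt_19 :
    Tendsto (fun N => ∑ n ∈ Finset.range N, (-1 : ℝ) ^ n / (n + 1) * skewHarmonic (n + 1)) atTop
      (nhds ((Real.log 2) ^ 2 / 2 + Real.pi ^ 2 / 12)) := by
  have h := (((tendsto_skewHarmonic.pow 2).add tendsto_basel).div_const 2)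
  have heq : (Real.log 2 ^ 2 + Real.pi ^ 2 / 6) / 2 =
      Real.log 2 ^ 2 / 2 + Real.pi ^ 2 / 12 := by ring
  rw [heq] at h
  exact h.congr fun N => (sum_identity N).symm
end
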